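/- arXiv:2305.12145 — 6 statements merged into one kernel-verified Lean document; each statement's English description precedes it below -/
import Mathlib

section
/- Let (K,v) be a valued field with value group isomorphic to ℤ, and let (L,w)/(K,v) be a finite extension which is totally ramified, i.e., [L:K] equals the ramification index (wL : vK). Then any uniformizer π of (L,w) generates L over K, and its minimal polynomial over the valuation ring O_v is an Eisenstein polynomial: all non-leading coefficients have positive valuation and the constant coefficient is a uniformizer of v. -/
open Polynomial Multiplicative

theorem val_sum_of_distinct {L : Type*} [Field L]
    (w : Valuation L (WithZero (Multiplicative ℤ)))
    {ι : Type*} (s : Finset ι) (f : ι → L)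
    (h : ∀ i ∈ s, ∀ j ∈ s, i ≠ j → w (f i) ≠ 0 → w (f j) ≠ 0 → w (f i) ≠ w (f j)) :
    w (∑ i ∈ s, f i) = s.sup (fun i => w (f i)) := by
  induction s using Finset.cons_induction with
  | empty => simp [← WithZero.coe_unzero]
  | cons a s ha IH =>
    rw [Finset.sum_cons, Finset.sup_cons]
    have hsub : ∀ i ∈ s, ∀ j ∈ s, i ≠ j → w (f i) ≠ 0 → w (f j) ≠ 0 → w (f i) ≠ w (f j) := by
      intro i hi j hj
      exact h i (Finset.mem_cons_of_mem hi) j (Finset.mem_cons_of_mem hj)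
    have IH' := IH hsub
    by_cases h0 : w (∑ i ∈ s, f i) = 0
    · have hs0 : (∑ i ∈ s, f i) = 0 := by
        exact (Valuation.zero_iff w).mp h0
      have hsup0 : s.sup (fun i => w (f i)) = 0 := IH'.symm.trans h0
      rw [hs0, add_zero, hsup0]
      exact (sup_eq_left.mpr zero_le').symm
    · have hne : w (f a) ≠ w (∑ i ∈ s, f i) := by
        have hsne : s.Nonempty := by
          rcases Finset.eq_empty_or_nonempty s with h | h
          · exact absurd (by simp [h]) h0
          · exact h
        obtain ⟨j, hj, hsup⟩ := Finset.exists_mem_eq_sup s hsne (fun i => w (f i))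
        rw [IH', hsup]
        by_cases hfa : w (f a) = 0
        · rw [hfa]
          intro hc
          exact h0 (by rw [IH', hsup, ← hc])
        · have hwj : w (f j) ≠ 0 := by rw [← hsup, ← IH']; exact h0
          exact h a (Finset.mem_cons_self a s) j (Finset.mem_cons_of_mem hj)
            (fun hc => ha (hc ▸ hj)) hfa hwj
      rw [Valuation.map_add_of_distinct_val w hne, IH']

/-- **Uniformizers of totally ramified extensions are Eisenstein generators**
(Lemma `lem:eisenstein-generator`).  Let `(L,w)` be a valued field with value group `ℤ`
(`w` surjective onto `WithZero (Multiplicative ℤ)`) and let `K ⊆ L` be a subfield such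
that `L/K` is a finite totally ramified extension of degree `e`, i.e. the value group of
`K` is `eℤ` (so `[L:K] = (wL : vK)`).  Then any uniformizer `π` of `(L,w)` generates `L`
over `K`, and its minimal polynomial is Eisenstein over `𝒪_v`: it is monic, all
non-leading coefficients have positive valuation (`w < 1`) and the constant coefficient
is a uniformizer of `v = w|_K` (its value is `-e`, the minimal positive value of `vK`). -/
theorem uniformizer_generates_and_eisenstein
    {K L : Type*} [Field K] [Field L] [Algebra K L] [FiniteDimensional K L]
    (w : Valuation L (WithZero (Multiplicative ℤ))) (hsurj : Function.Surjective w)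
    (e : ℕ) (he : Module.finrank K L = e)
    (hTR : ∀ x : K, x ≠ 0 → ∃ k : ℤ,
      w (algebraMap K L x) = (ofAdd ((e : ℤ) * k) : Multiplicative ℤ))
    (π : L) (hπ : w π = ((ofAdd (-1 : ℤ) : Multiplicative ℤ) : WithZero (Multiplicative ℤ))) :
    Algebra.adjoin K {π} = ⊤ ∧
    (minpoly K π).Monic ∧
    (∀ i < (minpoly K π).natDegree,
      w (algebraMap K L ((minpoly K π).coeff i)) < 1) ∧
    w (algebraMap K L ((minpoly K π).coeff 0)) =
      ((ofAdd (-(e : ℤ)) : Multiplicative ℤ) : WithZero (Multiplicative ℤ)) := by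
  have he1 : 1 ≤ e := by
    rw [← he]
    exact Module.finrank_pos
  -- value of a * π^i
  have hπpow : ∀ i : ℕ, w (π ^ i) = ((ofAdd (-(i:ℤ)) : Multiplicative ℤ) : WithZero (Multiplicative ℤ)) := by
    intro i
    rw [map_pow, hπ, ← WithZero.coe_pow]
    congr 1
    rw [← ofAdd_nsmul]
    congr 1
    simp [nsmul_eq_mul]
  have hval : ∀ (a : K) (i : ℕ), a ≠ 0 → ∃ k : ℤ,
      w (algebraMap K L a * π ^ i)
        = ((ofAdd ((e:ℤ) * k - i) : Multiplicative ℤ) : WithZero (Multiplicative ℤ)) := by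
    intro a i ha
    obtain ⟨k, hk⟩ := hTR a ha
    refine ⟨k, ?_⟩
    rw [map_mul, hk, hπpow i, ← WithZero.coe_mul, ← ofAdd_add]
    rfl
  have hdist : ∀ (i j : ℕ) (ki kj : ℤ), i < e → j < e →
      (e:ℤ) * ki - i = (e:ℤ) * kj - j → i = j := by
    intro i j ki kj hi hj h
    have hd : (e:ℤ) ∣ ((i:ℤ) - j) := ⟨ki - kj, by linarith⟩
    have := Int.eq_zero_of_abs_lt_dvd hd (by rw [abs_lt]; constructor <;> omega)
    omega
  -- pairwise distinctness of values of K-combinations of powers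
  have hpairwise : ∀ (c : ℕ → K), ∀ i ∈ Finset.range e, ∀ j ∈ Finset.range e, i ≠ j →
      w (algebraMap K L (c i) * π ^ i) ≠ 0 → w (algebraMap K L (c j) * π ^ j) ≠ 0 →
      w (algebraMap K L (c i) * π ^ i) ≠ w (algebraMap K L (c j) * π ^ j) := by
    intro c i hi j hj hij hwi hwj
    have hci : c i ≠ 0 := by
      intro h; apply hwi; rw [h, map_zero, zero_mul, map_zero]
    have hcj : c j ≠ 0 := by
      intro h; apply hwj; rw [h, map_zero, zero_mul, map_zero]
    obtain ⟨ki, hki⟩ := hval (c i) i hci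
    obtain ⟨kj, hkj⟩ := hval (c j) j hcj
    rw [hki, hkj]
    intro hc
    apply hij
    exact hdist i j ki kj (Finset.mem_range.mp hi) (Finset.mem_range.mp hj)
      (ofAdd.injective (WithZero.coe_inj.mp hc))
  have li : LinearIndependent K (fun i : Fin e => π ^ (i : ℕ)) := by
    rw [Fintype.linearIndependent_iff]
    intro g hg
    by_contra hgi
    push_neg at hgi
    obtain ⟨i0, hi0⟩ := hgi
    set c : ℕ → K := fun n => if h : n < e then g ⟨n, h⟩ else 0 with hc
    set f : ℕ → L := fun n => algebraMap K L (c n) * π ^ n with hf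
    have hπ0 : π ≠ 0 := by
      intro h
      rw [h, map_zero] at hπ
      exact WithZero.coe_ne_zero hπ.symm
    have hsum : ∑ n ∈ Finset.range e, f n = 0 := by
      rw [← Fin.sum_univ_eq_sum_range f e, ← hg]
      apply Finset.sum_congr rfl
      intro j _
      rw [hf, hc]
      simp only [j.isLt, dif_pos]
      rw [Algebra.smul_def]
    have hws := val_sum_of_distinct w (Finset.range e) f (hpairwise c)
    rw [hsum, map_zero] at hws
    have hle : w (f (i0 : ℕ)) ≤ 0 := by
      rw [hws]
      exact Finset.le_sup (f := fun n => w (f n)) (Finset.mem_range.mpr i0.isLt)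
    have hfi0 : f (i0 : ℕ) ≠ 0 := by
      rw [hf, hc]
      simp only [i0.isLt, dif_pos]
      exact mul_ne_zero ((map_ne_zero (algebraMap K L)).mpr hi0) (pow_ne_zero _ hπ0)
    exact hfi0 ((Valuation.zero_iff w).mp (le_antisymm hle (zero_le' )))
  -- degree of the minimal polynomial equals e, and adjoin is everything
  have hint : IsIntegral K π := IsIntegral.of_finite K π
  have hfr : Module.finrank K (Algebra.adjoin K {π}) = (minpoly K π).natDegree := by
    rw [(Algebra.adjoin.powerBasis hint).finrank, Algebra.adjoin.powerBasis_dim]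
  have hdle : (minpoly K π).natDegree ≤ e := he ▸ minpoly.natDegree_le π
  have hdge : e ≤ (minpoly K π).natDegree := by
    rw [← hfr]
    have li' : LinearIndependent K (fun i : Fin e =>
        (⟨π ^ (i : ℕ), pow_mem (Algebra.subset_adjoin (Set.mem_singleton π)) _⟩ :
          Algebra.adjoin K {π})) := by
      apply LinearIndependent.of_comp (Algebra.adjoin K {π}).val.toLinearMap
      convert li
      all_goals rfl
    simpa using li'.fintype_card_le_finrank
  have hdeg : (minpoly K π).natDegree = e := le_antisymm hdle hdge
  have htop : Algebra.adjoin K {π} = ⊤ := by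
    rw [← Algebra.toSubmodule_eq_top]
    apply Submodule.eq_top_of_finrank_eq
    rw [(Algebra.adjoin K {π}).finrank_toSubmodule, hfr, hdeg, he]
  -- the Eisenstein conditions
  have hmonic : (minpoly K π).Monic := minpoly.monic hint
  have hce : (minpoly K π).coeff e = 1 := by
    have h1 := hmonic.coeff_natDegree
    rwa [hdeg] at h1
  have haev : ∑ i ∈ Finset.range (e + 1),
      algebraMap K L ((minpoly K π).coeff i) * π ^ i = 0 := by
    have h0 := minpoly.aeval K π
    rw [Polynomial.aeval_eq_sum_range, hdeg] at h0
    rw [← h0]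
    exact Finset.sum_congr rfl fun j _ => (Algebra.smul_def _ _).symm
  have hS : ∑ i ∈ Finset.range e, algebraMap K L ((minpoly K π).coeff i) * π ^ i
      = -(π ^ e) := by
    rw [Finset.sum_range_succ, hce, map_one, one_mul] at haev
    exact eq_neg_of_add_eq_zero_left haev
  have hws := val_sum_of_distinct w (Finset.range e)
      (fun n => algebraMap K L ((minpoly K π).coeff n) * π ^ n)
      (hpairwise fun n => (minpoly K π).coeff n)
  rw [hS, Valuation.map_neg, hπpow e] at hws
  beta_reduce at hws
  have hterm : ∀ (i : ℕ) (k : ℤ),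
      w (algebraMap K L ((minpoly K π).coeff i))
        = ((ofAdd ((e:ℤ) * k) : Multiplicative ℤ) : WithZero (Multiplicative ℤ)) →
      w (algebraMap K L ((minpoly K π).coeff i) * π ^ i)
        = ((ofAdd ((e:ℤ) * k - i) : Multiplicative ℤ) : WithZero (Multiplicative ℤ)) := by
    intro i k hk
    rw [map_mul, hk, hπpow i, ← WithZero.coe_mul, ← ofAdd_add]
    rfl
  have hcoeffs : ∀ i < e, w (algebraMap K L ((minpoly K π).coeff i)) < 1 := by
    intro i hi
    by_cases hci : (minpoly K π).coeff i = 0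
    · rw [hci, map_zero, map_zero]
      exact zero_lt_one
    · obtain ⟨k, hk⟩ := hTR _ hci
      have hle : w (algebraMap K L ((minpoly K π).coeff i) * π ^ i)
          ≤ ((ofAdd (-(e:ℤ)) : Multiplicative ℤ) : WithZero (Multiplicative ℤ)) := by
        rw [hws]
        exact Finset.le_sup
          (f := fun n => w (algebraMap K L ((minpoly K π).coeff n) * π ^ n))
          (Finset.mem_range.mpr hi)
      rw [hterm i k hk] at hle
      have h1 : (e:ℤ) * k - i ≤ -(e:ℤ) := Multiplicative.ofAdd_le.mp (WithZero.coe_le_coe.mp hle)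
      have hie : (i:ℤ) < (e:ℤ) := by exact_mod_cast hi
      have h2 : (e:ℤ) * k < 0 := by linarith
      rw [hk]
      rw [show (1 : WithZero (Multiplicative ℤ))
        = ((1 : Multiplicative ℤ) : WithZero (Multiplicative ℤ)) from rfl]
      rw [WithZero.coe_lt_coe, ← ofAdd_zero]
      exact Multiplicative.ofAdd_lt.mpr h2
  have hc0 : w (algebraMap K L ((minpoly K π).coeff 0))
      = ((ofAdd (-(e:ℤ)) : Multiplicative ℤ) : WithZero (Multiplicative ℤ)) := by
    obtain ⟨j, hj, hsup⟩ := Finset.exists_mem_eq_sup (Finset.range e)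
      ⟨0, Finset.mem_range.mpr he1⟩
      (fun n => w (algebraMap K L ((minpoly K π).coeff n) * π ^ n))
    rw [hsup] at hws
    have hcj : (minpoly K π).coeff j ≠ 0 := by
      intro h
      rw [h, map_zero, zero_mul, map_zero] at hws
      exact WithZero.coe_ne_zero hws
    obtain ⟨k, hk⟩ := hTR _ hcj
    rw [hterm j k hk] at hws
    have heq : -(e:ℤ) = (e:ℤ) * k - j := ofAdd.injective (WithZero.coe_inj.mp hws)
    have hj0 : j = 0 := hdist j 0 k (-1) (Finset.mem_range.mp hj) he1
      (by push_cast; linarith)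
    rw [hj0] at hk heq
    rw [hk]
    congr 2
    push_cast at heq
    linarith
  refine ⟨htop, hmonic, ?_, hc0⟩
  intro i hi
  exact hcoeffs i (hdeg ▸ hi)
end

section
/- Let A be a discrete valuation ring of mixed characteristic (0,p) in which p is a uniformizer (i.e., A is unramified). For any Eisenstein polynomial f ∈ A[X] of degree e, the discriminant Δ_f of f does not lie in the ideal (p^{d(e)}), where d(e) = e(1 + v_p(e)) and v_p denotes the p-adic valuation on the integers. -/
open Polynomial

/-- `d(e) = e(1 + v_p(e))`. -/
def dEis (p e : ℕ) : ℕ := e * (1 + padicValNat p e)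

/-- **Discriminant bound for Eisenstein polynomials** (Lemma `lem:disc-bound`).
Let `A` be an unramified discrete valuation ring of mixed characteristic `(0,p)`
(`p` a uniformizer of `A`).  For any Eisenstein polynomial `f ∈ A[X]` of degree `e`,
the discriminant of `f` does not lie in the ideal `(p^{d(e)})`, where
`d(e) = e(1 + v_p(e))`.  (The discriminant is, up to sign, the norm `N_{B/A}(f'(π))`
where `B = A[π]` is generated by a root `π` of `f`.) -/
theorem eisenstein_discriminant_not_mem
    {A : Type*} [CommRing A] [IsDomain A] [IsDiscreteValuationRing A] [CharZero A]
    (p : ℕ) (hp : p.Prime) (hpA : Irreducible (p : A))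
    (f : A[X]) (e : ℕ) (hdeg : f.natDegree = e) (hmonic : f.Monic)
    (hf : f.IsEisensteinAt (IsLocalRing.maximalIdeal A))
    {B : Type*} [CommRing B] [IsDomain B] [Algebra A B]
    [Module.Finite A B] [Module.Free A B]
    (π : B) (hroot : Polynomial.aeval π f = 0)
    (hgen : Algebra.adjoin A {π} = ⊤) :
    Algebra.norm A (Polynomial.aeval π (derivative f)) ∉
      Ideal.span {(p : A) ^ dEis p e} := by
  classical
  intro hmem
  have hp0A : (p : A) ≠ 0 := Nat.cast_ne_zero.mpr hp.ne_zero
  have hpnu : ¬ IsUnit ((p : ℕ) : A) := hpA.not_isUnit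
  have hmaxA : IsLocalRing.maximalIdeal A = Ideal.span {(p : A)} :=
    (IsDiscreteValuationRing.irreducible_iff_uniformizer _).mp hpA
  -- `e ≥ 1`
  have he : 0 < e := by
    rcases Nat.eq_zero_or_pos e with h0 | h
    · exfalso
      have h1 : f = 1 := hmonic.natDegree_eq_zero.mp (hdeg.trans h0)
      rw [h1] at hroot
      simp at hroot
    · exact h
  subst hdeg
  set e := f.natDegree with hE
  -- facts about the constant coefficient
  have ha0m : f.coeff 0 ∈ IsLocalRing.maximalIdeal A := hf.mem he
  obtain ⟨u₀, hu₀⟩ : ∃ u₀, f.coeff 0 = (p : A) * u₀ := by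
    rw [hmaxA, Ideal.mem_span_singleton] at ha0m; exact ha0m
  have hu₀u : IsUnit u₀ := by
    by_contra h
    apply hf.notMem
    have h1 : u₀ ∈ IsLocalRing.maximalIdeal A :=
      (IsLocalRing.mem_maximalIdeal u₀).mpr (mem_nonunits_iff.mpr h)
    rw [hmaxA, Ideal.mem_span_singleton] at h1
    obtain ⟨c, rfl⟩ := h1
    rw [hmaxA, Ideal.span_singleton_pow]
    exact Ideal.mem_span_singleton.mpr ⟨c, by rw [hu₀]; ring⟩
  -- factor the middle part of `f`
  obtain ⟨h₁, hfact⟩ : ∃ h₁ : A[X], f = X ^ e + C (p : A) * (X * h₁) + C (f.coeff 0) := by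
    have hdvd : C (p : A) ∣ f - X ^ e - C (f.coeff 0) := by
      rw [C_dvd_iff_dvd_coeff]
      intro i
      rcases lt_trichotomy i e with hi | rfl | hi
      · rcases Nat.eq_zero_or_pos i with rfl | hi0
        · simp [coeff_X_pow, coeff_C, he.ne]
        · have h1 : f.coeff i ∈ Ideal.span {(p : A)} := hmaxA ▸ hf.mem hi
          rw [Ideal.mem_span_singleton] at h1
          simpa [coeff_X_pow, coeff_C, hi.ne, hi0.ne'] using h1
      · simp [coeff_X_pow, coeff_C, (show f.coeff e = 1 from hmonic.coeff_natDegree), he.ne']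
      · simp [coeff_X_pow, coeff_C, hi.ne', coeff_eq_zero_of_natDegree_lt hi,
          (he.trans hi).ne']
    obtain ⟨g₂, hg₂⟩ := hdvd
    have hg₂0 : g₂.coeff 0 = 0 := by
      have h0 := congrArg (fun q : A[X] => q.coeff 0) hg₂
      simp only [coeff_sub, coeff_C_mul, coeff_X_pow, coeff_C, if_neg he.ne, eq_self_iff_true, if_true] at h0
      have hmz : (p : A) * g₂.coeff 0 = 0 := by linear_combination -h0
      exact (mul_eq_zero.mp hmz).resolve_left hp0A
    obtain ⟨h₁, hh₁⟩ := X_dvd_iff.mpr hg₂0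
    refine ⟨h₁, ?_⟩
    rw [hh₁] at hg₂
    linear_combination hg₂
  -- evaluate `f` at `π`
  have hkey : π ^ e + algebraMap A B (p : A) * (π * aeval π h₁)
      + algebraMap A B (p : A) * algebraMap A B u₀ = 0 := by
    have h1 := hroot
    rw [hfact] at h1
    rw [hu₀] at h1
    simpa [map_add, map_mul, map_pow, aeval_C, mul_assoc] using h1
  -- `π ≠ 0`
  have ha00 : f.coeff 0 ≠ 0 := by
    intro h
    exact hf.notMem (h ▸ Ideal.zero_mem _)
  have hinjA : Function.Injective (algebraMap A B) :=
    FaithfulSMul.algebraMap_injective A B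
  have hπ0 : π ≠ 0 := by
    rintro rfl
    rw [zero_pow he.ne'] at hkey
    have h1 : algebraMap A B (f.coeff 0) = 0 := by
      rw [hu₀, map_mul]
      linear_combination hkey
    exact ha00 (hinjA (by rw [h1, map_zero]))
  -- irreducibility of `f`
  have hfirr : Irreducible f := by
    apply irreducible_of_eisenstein_criterion
      (Ideal.IsMaximal.isPrime (IsLocalRing.maximalIdeal.isMaximal A)) hf.leading
    · intro n hn
      apply hf.mem
      rwa [degree_eq_natDegree hmonic.ne_zero, Nat.cast_lt] at hn
    · rw [degree_eq_natDegree hmonic.ne_zero]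
      exact_mod_cast he
    · exact hf.notMem
    · exact hmonic.isPrimitive
  -- `f` divides every polynomial vanishing at `π`
  have hint : IsIntegral A π := ⟨f, hmonic, hroot⟩
  have hfdvd : ∀ g : A[X], aeval π g = 0 → f ∣ g := by
    intro g hg
    have h1 : minpoly A π ∣ g := minpoly.isIntegrallyClosed_dvd hint hg
    have h2 : minpoly A π ∣ f := minpoly.isIntegrallyClosed_dvd hint hroot
    obtain ⟨c, hc⟩ := h2
    rcases hfirr.isUnit_or_isUnit hc with h | h
    · exact absurd (natDegree_eq_zero_of_isUnit h) (minpoly.natDegree_pos hint).ne'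
    · obtain ⟨cu, rfl⟩ := h
      have h3 : f * ↑cu⁻¹ = minpoly A π := by
        rw [hc, mul_assoc, Units.mul_inv, mul_one]
      exact dvd_trans ⟨↑cu⁻¹, h3.symm⟩ h1
  -- the isomorphism `AdjoinRoot f ≃ₐ[A] B`
  set L := AdjoinRoot.liftAlgHom f (Algebra.ofId A B) π (by simpa [aeval_def] using hroot) with hL
  have hLinj : Function.Injective L := by
    rw [injective_iff_map_eq_zero]
    intro z hz
    obtain ⟨g, rfl⟩ := AdjoinRoot.mk_surjective z
    rw [hL, AdjoinRoot.liftAlgHom_mk] at hz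
    exact AdjoinRoot.mk_eq_zero.mpr (hfdvd g hz)
  have hLsurj : Function.Surjective L := by
    intro b
    have hb : b ∈ Algebra.adjoin A {π} := hgen.symm ▸ Algebra.mem_top
    rw [Algebra.adjoin_singleton_eq_range_aeval] at hb
    obtain ⟨g, hg⟩ := hb
    exact ⟨AdjoinRoot.mk f g, by rw [hL, AdjoinRoot.liftAlgHom_mk]; exact hg⟩
  set equiv : AdjoinRoot f ≃ₐ[A] B :=
    AlgEquiv.ofBijective L ⟨hLinj, hLsurj⟩ with hequiv
  have hequiv_apply : ∀ z, equiv z = L z := fun z => rfl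
  have hequiv_root : equiv (AdjoinRoot.root f) = π := by
    rw [hequiv_apply, hL, AdjoinRoot.liftAlgHom_root]
  -- power basis of `B`
  set pb := (AdjoinRoot.powerBasis' hmonic).map equiv with hpb
  have hpbdim : pb.dim = e := rfl
  have hpbgen : pb.gen = π := by
    rw [hpb, PowerBasis.map_gen, AdjoinRoot.powerBasis'_gen, hequiv_root]
  set b : Module.Basis (Fin e) A B := pb.basis.reindex (finCongr hpbdim) with hbdef
  have hb : ∀ i : Fin e, b i = π ^ (i : ℕ) := by
    intro i
    rw [hbdef, Module.Basis.reindex_apply, PowerBasis.coe_basis, hpbgen]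
    rfl
  -- the residue field map
  set κ := IsLocalRing.ResidueField A with hκ
  set q : A →+* κ := IsLocalRing.residue A with hq
  have hev : f.eval₂ q 0 = 0 := by
    rw [eval₂_at_zero]
    exact Ideal.Quotient.eq_zero_iff_mem.mpr ha0m
  set φ : B →+* κ :=
    (AdjoinRoot.lift q 0 hev).comp
      ((equiv.symm : B ≃ₐ[A] AdjoinRoot f) : B →+* AdjoinRoot f) with hφ
  have hφalg : ∀ a : A, φ (algebraMap A B a) = q a := by
    intro a
    have h1 : equiv.symm (algebraMap A B a) = algebraMap A (AdjoinRoot f) a :=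
      equiv.symm.commutes a
    rw [hφ, RingHom.comp_apply]
    rw [show ((equiv.symm : B ≃ₐ[A] AdjoinRoot f) : B →+* AdjoinRoot f) (algebraMap A B a)
        = algebraMap A (AdjoinRoot f) a from h1]
    rw [AdjoinRoot.algebraMap_eq, AdjoinRoot.lift_of]
  have hequiv_symm_π : equiv.symm π = AdjoinRoot.root f := by
    rw [AlgEquiv.symm_apply_eq, hequiv_root]
  have hφπ : φ π = 0 := by
    rw [hφ, RingHom.comp_apply]
    rw [show ((equiv.symm : B ≃ₐ[A] AdjoinRoot f) : B →+* AdjoinRoot f) π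
        = AdjoinRoot.root f from hequiv_symm_π]
    exact AdjoinRoot.lift_root hev
  have hφsurj : Function.Surjective φ := by
    intro c
    obtain ⟨a, rfl⟩ := Ideal.Quotient.mk_surjective c
    exact ⟨algebraMap A B a, hφalg a⟩
  -- `p` lies in the ideal generated by `π`
  have hpπ : algebraMap A B (p : A) ∈ Ideal.span {π} := by
    rw [Ideal.mem_span_singleton]
    have hu₀B : IsUnit (algebraMap A B u₀) := hu₀u.map (algebraMap A B)
    have hπsplit : π ^ e = π * π ^ (e - 1) := by
      rw [← pow_succ']
      congr 1
      omega
    have hdvd1 : π ∣ algebraMap A B (p : A) * algebraMap A B u₀ :=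
      ⟨-(π ^ (e - 1)) - algebraMap A B (p : A) * aeval π h₁, by
        linear_combination hkey - hπsplit⟩
    obtain ⟨v, hv⟩ := hu₀B
    obtain ⟨z, hz⟩ := hdvd1
    exact ⟨z * ↑v⁻¹, by
      have : algebraMap A B (p : A) * algebraMap A B u₀ * ↑v⁻¹ = algebraMap A B (p : A) := by
        rw [← hv, mul_assoc, Units.mul_inv, mul_one]
      rw [← this, hz, mul_assoc]⟩
  -- kernel of `φ` is the ideal generated by `π`
  have hker : RingHom.ker φ = Ideal.span {π} := by
    apply le_antisymm
    · intro z hz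
      rw [RingHom.mem_ker] at hz
      obtain ⟨g, hg⟩ : ∃ g : A[X], aeval π g = z := by
        have hb' : z ∈ Algebra.adjoin A {π} := hgen.symm ▸ Algebra.mem_top
        rw [Algebra.adjoin_singleton_eq_range_aeval] at hb'
        exact hb'
      have hsymm : equiv.symm z = AdjoinRoot.mk f g := by
        rw [AlgEquiv.symm_apply_eq, hequiv_apply, hL, AdjoinRoot.liftAlgHom_mk]
        exact hg.symm
      have hφz : q (g.coeff 0) = 0 := by
        have h1 : φ z = q (g.coeff 0) := by
          rw [hφ, RingHom.comp_apply]
          rw [show ((equiv.symm : B ≃ₐ[A] AdjoinRoot f) : B →+* AdjoinRoot f) z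
              = AdjoinRoot.mk f g from hsymm]
          rw [AdjoinRoot.lift_mk, eval₂_at_zero]
        rw [← h1, hz]
      have hg0 : g.coeff 0 ∈ Ideal.span {(p : A)} := by
        rw [← hmaxA]
        exact Ideal.Quotient.eq_zero_iff_mem.mp hφz
      obtain ⟨c, hc⟩ := Ideal.mem_span_singleton.mp hg0
      obtain ⟨g₂, hg₂⟩ := X_dvd_iff.mpr (show (g - C (g.coeff 0)).coeff 0 = 0 by simp)
      have hz2 : z = π * aeval π g₂ + algebraMap A B (g.coeff 0) := by
        rw [← hg]
        conv_lhs => rw [show g = X * g₂ + C (g.coeff 0) by linear_combination hg₂]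
        simp
      rw [hz2, hc]
      refine Ideal.add_mem _ (Ideal.mul_mem_right _ _ (Ideal.mem_span_singleton_self π)) ?_
      rw [map_mul]
      exact Ideal.mul_mem_right _ _ hpπ
    · rw [Ideal.span_le, Set.singleton_subset_iff]
      exact RingHom.mem_ker.mpr hφπ
  have hmaxπ : (Ideal.span {π}).IsMaximal :=
    hker ▸ RingHom.ker_isMaximal_of_surjective φ hφsurj
  -- `B` is local with maximal ideal `(π)`
  have hBint : Algebra.IsIntegral A B := Algebra.IsIntegral.of_finite A B
  have huniq : ∀ M : Ideal B, M.IsMaximal → M = Ideal.span {π} := by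
    intro M hM
    have hcom : (Ideal.comap (algebraMap A B) M).IsMaximal :=
      Ideal.isMaximal_comap_of_isIntegral_of_isMaximal M
    have hpM : algebraMap A B (p : A) ∈ M := by
      have h1 : (p : A) ∈ Ideal.comap (algebraMap A B) M := by
        rw [IsLocalRing.eq_maximalIdeal hcom, hmaxA]
        exact Ideal.mem_span_singleton_self _
      exact h1
    have hπe : π ^ e ∈ M := by
      have h1 : π ^ e = -(algebraMap A B (p : A) * (π * aeval π h₁))
          - algebraMap A B (p : A) * algebraMap A B u₀ := by
        linear_combination hkey
      rw [h1]
      exact sub_mem (neg_mem (Ideal.mul_mem_right _ _ hpM)) (Ideal.mul_mem_right _ _ hpM)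
    have hπM : π ∈ M := hM.isPrime.mem_of_pow_mem e hπe
    exact ((hmaxπ.eq_of_le hM.ne_top
      (Ideal.span_le.mpr (Set.singleton_subset_iff.mpr hπM)))).symm
  have hlocB : IsLocalRing B :=
    IsLocalRing.of_unique_max_ideal ⟨Ideal.span {π}, hmaxπ, fun M hM => huniq M hM⟩
  have hmaxB : IsLocalRing.maximalIdeal B = Ideal.span {π} :=
    (IsLocalRing.eq_maximalIdeal hmaxπ).symm
  have hunit : ∀ y : B, y ∉ Ideal.span {π} → IsUnit y := by
    intro y hy
    by_contra h
    exact hy (hmaxB ▸ (IsLocalRing.mem_maximalIdeal y).mpr (mem_nonunits_iff.mpr h))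
  -- `p` is associated to `π ^ e`
  have hassoc : Associated (algebraMap A B (p : A)) (π ^ e) := by
    have hwu : IsUnit (-(algebraMap A B u₀ + π * aeval π h₁)) := by
      apply IsUnit.neg
      by_contra h
      have h1 : algebraMap A B u₀ + π * aeval π h₁ ∈ Ideal.span {π} :=
        hmaxB ▸ (IsLocalRing.mem_maximalIdeal _).mpr (mem_nonunits_iff.mpr h)
      have h2 : π * aeval π h₁ ∈ Ideal.span {π} :=
        Ideal.mul_mem_right _ _ (Ideal.mem_span_singleton_self π)
      have h3 : algebraMap A B u₀ ∈ Ideal.span {π} := by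
        simpa using Ideal.sub_mem _ h1 h2
      exact hmaxπ.ne_top (Ideal.eq_top_of_isUnit_mem _ h3 (hu₀u.map (algebraMap A B)))
    obtain ⟨w, hw⟩ := hwu
    exact ⟨w, by rw [hw]; linear_combination -hkey⟩
  obtain ⟨w, hw⟩ := hassoc
  -- norm computations
  have hNp : Algebra.norm A (algebraMap A B (p : A)) = (p : A) ^ e := by
    rw [Algebra.norm_algebraMap_of_basis b]
    simp
  obtain ⟨wA, hwA⟩ : IsUnit (Algebra.norm A (w : B)) := w.isUnit.map (Algebra.norm A)
  have hNrel : (p : A) ^ e * ↑wA = Algebra.norm A π ^ e := by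
    rw [hwA, ← hNp, ← map_pow, ← map_mul, hw]
  have hNπ0 : Algebra.norm A π ≠ 0 := by
    intro h0
    rw [h0, zero_pow he.ne'] at hNrel
    exact wA.ne_zero ((mul_eq_zero.mp hNrel).resolve_left (pow_ne_zero e hp0A))
  obtain ⟨n, un, hNπ⟩ := IsDiscreteValuationRing.eq_unit_mul_pow_irreducible hNπ0 hpA
  have hn1 : n = 1 := by
    have h1 : Associated ((p : A) ^ e) (Algebra.norm A π ^ e) := ⟨wA, hNrel⟩
    have h2 : Associated ((p : A) ^ (n * e)) (Algebra.norm A π ^ e) :=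
      ⟨un ^ e, by rw [hNπ, mul_pow, ← pow_mul, mul_comm ((p:A) ^ (n*e)) _, Units.val_pow_eq_pow_val,
        mul_comm n e, pow_mul]⟩
    have h3 : Associated ((p : A) ^ e) ((p : A) ^ (n * e)) := h1.trans h2.symm
    have h4 : e ≤ n * e := (pow_dvd_pow_iff hp0A hpnu).mp h3.dvd
    have h5 : n * e ≤ e := (pow_dvd_pow_iff hp0A hpnu).mp h3.symm.dvd
    have h6 : n * e = e := le_antisymm h5 h4
    exact Nat.eq_of_mul_eq_mul_right he (by rw [one_mul]; exact h6)
  rw [hn1, pow_one] at hNπ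
  -- the key divisibility lemma
  have hπe0 : π ^ e ≠ 0 := pow_ne_zero _ hπ0
  have key : ∀ (t : ℕ) (c : Fin e → A),
      (π ^ (e * t) ∣ ∑ i : Fin e, c i • π ^ (i : ℕ)) → ∀ i, (p : A) ^ t ∣ c i := by
    intro t
    induction t with
    | zero => intro c _ i; simp only [pow_zero]; exact one_dvd _
    | succ t ih =>
      intro c hc i
      have hdiv_e : π ^ e ∣ ∑ i : Fin e, c i • π ^ (i : ℕ) :=
        dvd_trans (pow_dvd_pow π (Nat.le_mul_of_pos_right e (Nat.succ_pos t))) hc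
      have hpdvd : algebraMap A B (p : A) ∣ ∑ i : Fin e, c i • π ^ (i : ℕ) :=
        dvd_trans ⟨w, hw.symm⟩ hdiv_e
      obtain ⟨y, hy⟩ := hpdvd
      have hyrep : y = ∑ i : Fin e, (b.repr y i) • π ^ (i : ℕ) := by
        conv_lhs => rw [← b.sum_repr y]
        exact Finset.sum_congr rfl (fun i _ => by rw [hb i])
      set d : Fin e → A := fun i => b.repr y i with hd
      have hsum : ∑ j : Fin e, ((p : A) * d j) • π ^ (j : ℕ)
          = algebraMap A B (p : A) * y := by
        conv_rhs => rw [hyrep]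
        rw [Finset.mul_sum]
        refine Finset.sum_congr rfl fun j _ => ?_
        rw [Algebra.smul_def, Algebra.smul_def, map_mul, mul_assoc]
      have hzero : ∑ j : Fin e, (c j - (p : A) * d j) • b j = 0 := by
        have h1 : ∑ j : Fin e, (c j - (p : A) * d j) • b j
            = (∑ j : Fin e, c j • π ^ (j : ℕ)) - ∑ j : Fin e, ((p : A) * d j) • π ^ (j : ℕ) := by
          rw [← Finset.sum_sub_distrib]
          exact Finset.sum_congr rfl fun j _ => by rw [hb j, sub_smul]
        rw [h1, hsum, hy, sub_self]
      have hceq : ∀ j, c j = (p : A) * d j := fun j =>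
        sub_eq_zero.mp (Fintype.linearIndependent_iff.mp b.linearIndependent _ hzero j)
      have hnext : π ^ (e * t) ∣ ∑ j : Fin e, d j • π ^ (j : ℕ) := by
        have h1 : π ^ (e * (t + 1)) ∣ algebraMap A B (p : A) * y := hy ▸ hc
        have h3 : π ^ (e * (t + 1)) ∣ π ^ e * y := by
          have h2 := h1.mul_right (w : B)
          rwa [mul_right_comm, hw] at h2
        have h4 : π ^ e * π ^ (e * t) ∣ π ^ e * y := by
          rw [← pow_add, show e + e * t = e * (t + 1) by ring]
          exact h3
        have h5 : π ^ (e * t) ∣ y := (mul_dvd_mul_iff_left hπe0).mp h4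
        rwa [hyrep] at h5
      rw [hceq i, pow_succ']
      exact mul_dvd_mul_left _ (ih d hnext i)
  -- apply everything to `f'(π)`
  set k := padicValNat p e with hk
  have hd' : (derivative f).natDegree < e := natDegree_derivative_lt he.ne'
  have hxeq : aeval π (derivative f) = ∑ i : Fin e, (derivative f).coeff i • π ^ (i : ℕ) := by
    rw [aeval_eq_sum_range' hd', ← Fin.sum_univ_eq_sum_range]
  have he1 : e - 1 + 1 = e := Nat.succ_pred_eq_of_pos he
  have htop : (derivative f).coeff (e - 1) = (e : A) := by
    rw [coeff_derivative]
    have hcast : ((e - 1 : ℕ) : A) + 1 = ((e : ℕ) : A) := by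
      rw [show ((e : ℕ) : A) = ((e - 1 + 1 : ℕ) : A) by rw [he1]]
      push_cast
      ring
    rw [show e - 1 + 1 = e from he1, hmonic.coeff_natDegree, one_mul, hcast]
  have hefact : (e : A) = (p : A) ^ k * ((e / p ^ k : ℕ) : A) := by
    rw [← Nat.cast_pow, ← Nat.cast_mul]
    congr 1
    rw [hk, ← Nat.factorization_def e hp]
    exact (Nat.ordProj_mul_ordCompl_eq_self e p).symm
  have hcop : ¬ (p : A) ∣ ((e / p ^ k : ℕ) : A) := by
    intro hdvd
    have hc : Nat.Coprime p (e / p ^ k) := by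
      apply hp.coprime_iff_not_dvd.mpr
      rw [hk, ← Nat.factorization_def e hp]
      exact Nat.not_dvd_ordCompl hp he.ne'
    exact hpnu (hc.cast.isUnit_of_dvd' dvd_rfl hdvd)
  have hcontra : ¬ (π ^ (e * (k + 1)) ∣ aeval π (derivative f)) := by
    intro hdvd
    rw [hxeq] at hdvd
    have h1 := key (k + 1) (fun i => (derivative f).coeff i) hdvd ⟨e - 1, by omega⟩
    simp only at h1
    rw [htop, hefact, pow_succ] at h1
    exact hcop ((mul_dvd_mul_iff_left (pow_ne_zero k hp0A)).mp h1)
  -- extract the exact power of `π` in `f'(π)`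
  have hex : ∃ j, ¬ π ^ j ∣ aeval π (derivative f) := ⟨e * (k + 1), hcontra⟩
  have hj₀le : Nat.find hex ≤ e * (k + 1) := Nat.find_le hcontra
  have hj₀pos : 0 < Nat.find hex := by
    rcases Nat.eq_zero_or_pos (Nat.find hex) with h | h
    · exfalso
      have h1 := Nat.find_spec hex
      rw [h, pow_zero] at h1
      exact h1 (one_dvd _)
    · exact h
  set m := Nat.find hex - 1 with hm
  have hmd : π ^ m ∣ aeval π (derivative f) := by
    by_contra h
    have := Nat.find_min' hex h
    omega
  have hmnd : ¬ π ^ (m + 1) ∣ aeval π (derivative f) := by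
    rw [show m + 1 = Nat.find hex by omega]
    exact Nat.find_spec hex
  obtain ⟨y, hy⟩ := hmd
  have hyu : IsUnit y := by
    apply hunit
    rw [Ideal.mem_span_singleton]
    rintro ⟨z, hz⟩
    exact hmnd ⟨z, by rw [hy, hz, pow_succ]; ring⟩
  obtain ⟨yu, hyu'⟩ := hyu.map (Algebra.norm A)
  have hNx : Algebra.norm A (aeval π (derivative f)) = (↑un * (p : A)) ^ m * ↑yu := by
    rw [hy, map_mul, map_pow, hNπ, hyu']
  -- conclude
  rw [Ideal.mem_span_singleton] at hmem
  have hdm : (p : A) ^ dEis p e ∣ (p : A) ^ m := by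
    rw [hNx] at hmem
    rw [show (↑un * (p : A)) ^ m * ↑yu = ↑(un ^ m) * ((p : A) ^ m * ↑yu) by
      rw [Units.val_pow_eq_pow_val, mul_pow]; ring] at hmem
    rw [Units.dvd_mul_left, Units.dvd_mul_right] at hmem
    exact hmem
  have hle : dEis p e ≤ m := (pow_dvd_pow_iff hp0A hpnu).mp hdm
  have hde : dEis p e = e * (k + 1) := by
    unfold dEis
    rw [hk]
    ring
  omega
end

section
/- Let (K,v) be a valued field of mixed characteristic (0,p) with finite initial ramification e (i.e., the interval (0, v(p)] in the value group has exactly e elements), with residue field k and valuation ring O_v. Fix d ≥ 1. Then for each α in the set k^{(p^{de-1})} of (p^{de-1})-th powers of k, there is a unique element a in (O_v/p^d)^{(p^{de-1})} (the set of (p^{de-1})-th powers of the ring O_v/p^d) whose residue in k is α. -/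
open IsLocalRing

section Aux
variable {K Γ₀ : Type*} [Field K] [LinearOrderedCommGroupWithZero Γ₀]

private lemma teich_mem_max_iff (v : Valuation K Γ₀) (x : v.valuationSubring) :
    x ∈ IsLocalRing.maximalIdeal v.valuationSubring ↔ v (x : K) < 1 :=
  (ValuationSubring.valuation_lt_one_iff _ _).trans
    ((Valuation.isEquiv_valuation_valuationSubring v).lt_one_iff_lt_one (x := (x : K))).symm

private lemma teich_prod_le_one : ∀ (l : List Γ₀), (∀ γ ∈ l, γ ≤ 1) → l.prod ≤ 1
  | [], _ => by simp
  | x :: l, h => by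
    rw [List.prod_cons]
    calc x * l.prod ≤ 1 * 1 :=
          mul_le_mul' (h x (by simp)) (teich_prod_le_one l fun γ hγ => h γ (by simp [hγ]))
      _ = 1 := one_mul 1

private lemma teich_list_le_ncard (l : List Γ₀) (h1 : ∀ x ∈ l, x < 1) (h0 : l.prod ≠ 0)
    (hfin : {δ : Γ₀ | l.prod ≤ δ ∧ δ < 1}.Finite) :
    l.length ≤ {δ : Γ₀ | l.prod ≤ δ ∧ δ < 1}.ncard := by
  induction l with
  | nil => simp
  | cons x l ih =>
    simp only [List.prod_cons] at h0 hfin ⊢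
    have hx : x < 1 := h1 x (by simp)
    have hl1 : ∀ γ ∈ l, γ < 1 := fun γ hγ => h1 γ (by simp [hγ])
    have hl0 : l.prod ≠ 0 := right_ne_zero_of_mul h0
    have hle1 : l.prod ≤ 1 := teich_prod_le_one l fun γ hγ => (hl1 γ hγ).le
    have hlt : x * l.prod < l.prod := by
      refine lt_of_le_of_ne ?_ fun h => hx.ne (mul_right_cancel₀ hl0 (h.trans (one_mul _).symm))
      calc x * l.prod ≤ 1 * l.prod := mul_le_mul_left hx.le _
        _ = l.prod := one_mul _
    have hsub : {δ : Γ₀ | l.prod ≤ δ ∧ δ < 1} ⊆ {δ : Γ₀ | x * l.prod ≤ δ ∧ δ < 1} :=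
      fun δ h => ⟨le_trans hlt.le h.1, h.2⟩
    have hfin' : {δ : Γ₀ | l.prod ≤ δ ∧ δ < 1}.Finite := hfin.subset hsub
    have ih' := ih hl1 hl0 hfin'
    have hmem : x * l.prod ∉ {δ : Γ₀ | l.prod ≤ δ ∧ δ < 1} := fun h => absurd h.1 (not_le.2 hlt)
    have hins : insert (x * l.prod) {δ : Γ₀ | l.prod ≤ δ ∧ δ < 1}
        ⊆ {δ : Γ₀ | x * l.prod ≤ δ ∧ δ < 1} := by
      intro δ hδ
      rcases hδ with rfl | h
      · exact ⟨le_rfl, lt_of_lt_of_le hlt hle1⟩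
      · exact hsub h
    calc l.length + 1 ≤ {δ : Γ₀ | l.prod ≤ δ ∧ δ < 1}.ncard + 1 := by omega
      _ = (insert (x * l.prod) {δ : Γ₀ | l.prod ≤ δ ∧ δ < 1}).ncard :=
          (Set.ncard_insert_of_notMem hmem hfin').symm
      _ ≤ {δ : Γ₀ | x * l.prod ≤ δ ∧ δ < 1}.ncard := Set.ncard_le_ncard hins hfin

private def teichListIdeal (v : Valuation K Γ₀) (n : ℕ) : Ideal v.valuationSubring where
  carrier := {x | ∃ l : List Γ₀, l.length = n ∧ (∀ γ ∈ l, γ < 1) ∧ v (x : K) ≤ l.prod}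
  add_mem' := by
    rintro x y ⟨l₁, hl₁, h1₁, hle₁⟩ ⟨l₂, hl₂, h1₂, hle₂⟩
    rcases le_total l₁.prod l₂.prod with h | h
    · exact ⟨l₂, hl₂, h1₂, le_trans (v.map_add _ _) (max_le (hle₁.trans h) hle₂)⟩
    · exact ⟨l₁, hl₁, h1₁, le_trans (v.map_add _ _) (max_le hle₁ (hle₂.trans h))⟩
  zero_mem' := ⟨List.replicate n 0, List.length_replicate,
    fun γ hγ => by rw [List.eq_of_mem_replicate hγ]; exact zero_lt_one, by simp⟩
  smul_mem' := by
    rintro r x ⟨l, hl, h1, hle⟩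
    refine ⟨l, hl, h1, ?_⟩
    have : v ((r * x : v.valuationSubring) : K) = v (r : K) * v (x : K) := by
      push_cast; exact v.map_mul _ _
    calc v ((r • x : v.valuationSubring) : K) = v (r : K) * v (x : K) := by
          rw [smul_eq_mul]; exact this
      _ ≤ 1 * l.prod := mul_le_mul' r.2 hle
      _ = l.prod := one_mul _

private lemma teich_pow_le_listIdeal (v : Valuation K Γ₀) (n : ℕ) :
    (IsLocalRing.maximalIdeal v.valuationSubring) ^ n ≤ teichListIdeal v n := by
  induction n with
  | zero => exact fun x _ => ⟨[], rfl, by simp, x.2⟩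
  | succ n ih =>
    rw [pow_succ]
    refine Ideal.mul_le.2 fun r hr s hs => ?_
    obtain ⟨l, hl, h1, hle⟩ := ih hr
    refine ⟨v (s : K) :: l, by simp [hl], ?_, ?_⟩
    · intro γ hγ
      rcases List.mem_cons.1 hγ with rfl | h
      · exact (teich_mem_max_iff v s).1 hs
      · exact h1 γ h
    · calc v ((r * s : v.valuationSubring) : K) = v (s : K) * v (r : K) := by
            push_cast; rw [v.map_mul, mul_comm]
        _ ≤ v (s : K) * l.prod := mul_le_mul' le_rfl hle
        _ = (v (s : K) :: l).prod := (List.prod_cons).symm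

end Aux
section Aux2
variable {K Γ₀ : Type*} [Field K] [LinearOrderedCommGroupWithZero Γ₀]

private lemma teich_prod_le_vp (v : Valuation K Γ₀) {π : K} (hπ : v π ≠ 0) (hvp : v π < 1)
    {e : ℕ} (hfin : {γ : Γ₀ | v π ≤ γ ∧ γ < 1}.Finite)
    (hcard : {γ : Γ₀ | v π ≤ γ ∧ γ < 1}.ncard = e)
    (l : List Γ₀) (hl : l.length = e) (h1 : ∀ γ ∈ l, γ < 1) : l.prod ≤ v π := by
  by_contra h
  push_neg at h
  have h0 : l.prod ≠ 0 := fun h0 => absurd (h0 ▸ h) (by simp)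
  have hTsub : {δ : Γ₀ | l.prod ≤ δ ∧ δ < 1} ⊆ {γ : Γ₀ | v π ≤ γ ∧ γ < 1} :=
    fun δ hδ => ⟨le_trans h.le hδ.1, hδ.2⟩
  have hTfin := hfin.subset hTsub
  have hB := teich_list_le_ncard l h1 h0 hTfin
  have hπmem : v π ∈ {γ : Γ₀ | v π ≤ γ ∧ γ < 1} := ⟨le_rfl, hvp⟩
  have hπnot : v π ∉ {δ : Γ₀ | l.prod ≤ δ ∧ δ < 1} := fun hm => absurd hm.1 (not_le.2 h)
  have hins : insert (v π) {δ : Γ₀ | l.prod ≤ δ ∧ δ < 1} ⊆ {γ : Γ₀ | v π ≤ γ ∧ γ < 1} := by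
    intro δ hδ; rcases hδ with rfl | hδ
    · exact hπmem
    · exact hTsub hδ
  have : {δ : Γ₀ | l.prod ≤ δ ∧ δ < 1}.ncard + 1 ≤ e := by
    rw [← hcard, ← Set.ncard_insert_of_notMem hπnot hTfin]
    exact Set.ncard_le_ncard hins hfin
  omega

private lemma teich_mpow_le (v : Valuation K Γ₀) (p : ℕ) (hpK : (p : K) ≠ 0)
    (hvp : v (p : K) < 1) {e : ℕ} (hfin : {γ : Γ₀ | v (p : K) ≤ γ ∧ γ < 1}.Finite)
    (hcard : {γ : Γ₀ | v (p : K) ≤ γ ∧ γ < 1}.ncard = e) :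
    (IsLocalRing.maximalIdeal v.valuationSubring) ^ e
      ≤ Ideal.span {(p : v.valuationSubring)} := by
  intro x hx
  obtain ⟨l, hlen, h1, hle⟩ := teich_pow_le_listIdeal v e hx
  have hπ : v (p : K) ≠ 0 := fun h => hpK (v.zero_iff.1 h)
  have hvx : v (x : K) ≤ v (p : K) :=
    le_trans hle (teich_prod_le_vp v hπ hvp hfin hcard l hlen h1)
  rw [Ideal.mem_span_singleton]
  have hc : v ((x : K) / (p : K)) ≤ 1 := by
    rw [map_div₀, div_le_one₀ (zero_lt_iff.2 hπ)]
    exact hvx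
  refine ⟨⟨(x : K) / (p : K), hc⟩, ?_⟩
  apply Subtype.ext
  push_cast
  rw [mul_div_cancel₀ _ hpK]

end Aux2
section Aux3
variable {K Γ₀ : Type*} [Field K] [LinearOrderedCommGroupWithZero Γ₀]

set_option synthInstance.maxHeartbeats 400000 in
private lemma teich_pow_p_step (v : Valuation K Γ₀) (p : ℕ) (hp : p.Prime)
    (hpm : (p : v.valuationSubring) ∈ IsLocalRing.maximalIdeal v.valuationSubring)
    (x y : v.valuationSubring) (h : x - y ∈ IsLocalRing.maximalIdeal v.valuationSubring)
    (n : ℕ) :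
    x ^ p ^ n - y ^ p ^ n ∈ (IsLocalRing.maximalIdeal v.valuationSubring) ^ (n + 1) := by
  induction n with
  | zero => simpa using h
  | succ n ih =>
    set m := IsLocalRing.maximalIdeal v.valuationSubring with hm
    have hXY : x ^ p ^ n - y ^ p ^ n ∈ m := Ideal.pow_le_self (Nat.succ_ne_zero n) ih
    set X := x ^ p ^ n with hX
    set Y := y ^ p ^ n with hYdef
    have hpow : x ^ p ^ (n + 1) = X ^ p := by rw [hX, ← pow_mul, pow_succ]
    have hpow' : y ^ p ^ (n + 1) = Y ^ p := by rw [hYdef, ← pow_mul, pow_succ]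
    have key : X ^ p - Y ^ p = (∑ i ∈ Finset.range p, X ^ i * Y ^ (p - 1 - i)) * (X - Y) :=
      (geom_sum₂_mul X Y p).symm
    have hsum : (∑ i ∈ Finset.range p, X ^ i * Y ^ (p - 1 - i)) ∈ m := by
      rw [← Ideal.Quotient.eq_zero_iff_mem, map_sum]
      have hYX : Ideal.Quotient.mk m Y = Ideal.Quotient.mk m X :=
        (Ideal.Quotient.mk_eq_mk_iff_sub_mem Y X).2 (by simpa using m.neg_mem hXY)
      simp only [map_mul, map_pow, hYX]
      have heq : ∀ i ∈ Finset.range p,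
          (Ideal.Quotient.mk m X) ^ i * (Ideal.Quotient.mk m X) ^ (p - 1 - i)
            = (Ideal.Quotient.mk m X) ^ (p - 1) := by
        intro i hi
        rw [← pow_add]
        congr 1
        have := Finset.mem_range.1 hi
        omega
      rw [Finset.sum_congr rfl heq, Finset.sum_const, Finset.card_range, nsmul_eq_mul]
      have hp0 : ((p : ℕ) : (↥v.valuationSubring ⧸ m)) = 0 := by
        rw [← map_natCast (Ideal.Quotient.mk m), Ideal.Quotient.eq_zero_iff_mem]
        exact hpm
      rw [hp0, zero_mul]
    have hmul := Ideal.mul_mem_mul hsum ih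
    rw [← key] at hmul
    rw [hpow, hpow']
    have hmm : m * m ^ (n + 1) = m ^ (n + 1 + 1) := by rw [mul_comm, ← pow_succ]
    rwa [hmm] at hmul

end Aux3

/-- **Teichmüller representatives modulo `p^d`** (Lemma `lem:Teich`).
Let `(K,v)` be a valued field of mixed characteristic `(0,p)` with finite initial
ramification `e` (the interval `(0, v(p)]`, written multiplicatively as
`{γ | v p ≤ γ ∧ γ < 1}`, has exactly `e` elements).  Fix `d ≥ 1` and set
`q = p^(de-1)`.  Then every `q`-th power `α` of the residue field is the residue of a
unique `q`-th power of `𝒪_v / p^d`. -/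
theorem teichmueller_padic_power
    {K Γ₀ : Type*} [Field K] [LinearOrderedCommGroupWithZero Γ₀] [CharZero K]
    (v : Valuation K Γ₀) (p e d : ℕ) (hp : p.Prime)
    (hvp : v (p : K) < 1)
    (hfin : {γ : Γ₀ | v (p : K) ≤ γ ∧ γ < 1}.Finite)
    (hcard : {γ : Γ₀ | v (p : K) ≤ γ ∧ γ < 1}.ncard = e)
    (hd : 1 ≤ d)
    (α : IsLocalRing.ResidueField ↥(v.valuationSubring))
    (hα : ∃ β, β ^ (p ^ (d * e - 1)) = α) :
    ∃ a : v.valuationSubring,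
      (∃ b : v.valuationSubring,
        a - b ^ (p ^ (d * e - 1)) ∈ Ideal.span {(p : v.valuationSubring) ^ d}) ∧
      IsLocalRing.residue ↥(v.valuationSubring) a = α ∧
      ∀ a' : v.valuationSubring,
        (∃ b' : v.valuationSubring,
          a' - b' ^ (p ^ (d * e - 1)) ∈ Ideal.span {(p : v.valuationSubring) ^ d}) →
        IsLocalRing.residue ↥(v.valuationSubring) a' = α →
        a - a' ∈ Ideal.span {(p : v.valuationSubring) ^ d} := by
  classical
  set q := p ^ (d * e - 1) with hq
  have hpK : (p : K) ≠ 0 := Nat.cast_ne_zero.2 hp.ne_zero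
  have hπ : v (p : K) ≠ 0 := fun h => hpK (v.zero_iff.1 h)
  have hpm : (p : v.valuationSubring) ∈ IsLocalRing.maximalIdeal v.valuationSubring := by
    rw [teich_mem_max_iff]
    have hco : ((p : v.valuationSubring) : K) = (p : K) := by push_cast; rfl
    rwa [hco]
  have he : 1 ≤ e := by
    have hne : ({γ : Γ₀ | v (p : K) ≤ γ ∧ γ < 1}).Nonempty := ⟨v (p : K), le_rfl, hvp⟩
    have := (Set.ncard_pos hfin).2 hne
    omega
  have hde : 1 ≤ d * e := Nat.one_le_iff_ne_zero.2 (by positivity)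
  have hq0 : q ≠ 0 := pow_ne_zero _ hp.ne_zero
  have hp0 : ((p : ℕ) : IsLocalRing.ResidueField ↥(v.valuationSubring)) = 0 := by
    have h2 : IsLocalRing.residue ↥(v.valuationSubring) (p : v.valuationSubring) = 0 :=
      (Ideal.Quotient.eq_zero_iff_mem).2 hpm
    rwa [map_natCast] at h2
  haveI : Fact p.Prime := ⟨hp⟩
  haveI : CharP (IsLocalRing.ResidueField ↥(v.valuationSubring)) p :=
    (CharP.charP_iff_prime_eq_zero hp).2 hp0
  have hinj : ∀ s t : IsLocalRing.ResidueField ↥(v.valuationSubring), s ^ q = t ^ q → s = t := by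
    intro s t hst
    have h3 : (s - t) ^ q = 0 := by rw [hq, sub_pow_char_pow, ← hq, hst, sub_self]
    exact sub_eq_zero.1 ((pow_eq_zero_iff hq0).1 h3)
  have hspan_le : Ideal.span {(p : v.valuationSubring) ^ d}
      ≤ IsLocalRing.maximalIdeal v.valuationSubring := by
    rw [Ideal.span_singleton_le_iff_mem]
    exact Ideal.pow_mem_of_mem _ hpm d hd
  have hmde_le : (IsLocalRing.maximalIdeal v.valuationSubring) ^ (d * e)
      ≤ Ideal.span {(p : v.valuationSubring) ^ d} := by
    have h1 : (IsLocalRing.maximalIdeal v.valuationSubring) ^ (d * e)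
        = ((IsLocalRing.maximalIdeal v.valuationSubring) ^ e) ^ d := by
      rw [← pow_mul, mul_comm]
    have h2 := Ideal.pow_right_mono (teich_mpow_le v p hpK hvp hfin hcard) d
    rw [h1, ← Ideal.span_singleton_pow]
    exact h2
  obtain ⟨β, hβ⟩ := hα
  obtain ⟨b, hb⟩ := IsLocalRing.residue_surjective (R := ↥(v.valuationSubring)) β
  refine ⟨b ^ q, ⟨b, by simp⟩, ?_, ?_⟩
  · rw [map_pow, hb, hβ]
  · rintro a' ⟨b', hb'⟩ ha'
    have hres' : (IsLocalRing.residue ↥(v.valuationSubring) b') ^ q = α := by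
      have h1 : IsLocalRing.residue ↥(v.valuationSubring) (a' - b' ^ q) = 0 :=
        (Ideal.Quotient.eq_zero_iff_mem).2 (hspan_le hb')
      rw [map_sub, sub_eq_zero] at h1
      rw [← map_pow, ← h1, ha']
    have hresb : (IsLocalRing.residue ↥(v.valuationSubring) b) ^ q = α := by rw [hb, hβ]
    have hbb' : b - b' ∈ IsLocalRing.maximalIdeal v.valuationSubring := by
      have h2 : IsLocalRing.residue ↥(v.valuationSubring) (b - b') = 0 := by
        rw [map_sub, sub_eq_zero]
        exact hinj _ _ (by rw [hresb, hres'])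
      exact (Ideal.Quotient.eq_zero_iff_mem).1 h2
    have hkey : b ^ q - b' ^ q ∈ (IsLocalRing.maximalIdeal v.valuationSubring) ^ (d * e) := by
      have h4 := teich_pow_p_step v p hp hpm b b' hbb' (d * e - 1)
      have hrw : d * e - 1 + 1 = d * e := by omega
      rwa [hrw] at h4
    have hkey' : b ^ q - b' ^ q ∈ Ideal.span {(p : v.valuationSubring) ^ d} := hmde_le hkey
    have h5 : b ^ q - a' = (b ^ q - b' ^ q) - (a' - b' ^ q) := by ring
    rw [h5]
    exact Ideal.sub_mem _ hkey' hb'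
end

section
/- Let k be a field of characteristic p, let g ≥ 0, and let β_1, …, β_m ∈ k be p-independent elements. Given finitely many elements x_1, …, x_n ∈ k, one can extend the list to p-independent elements β_1, …, β_{m'}, with m' ≤ M_0(p,m,n,g), such that each x_i lies in the subring k^{(p^g)}[β_1, …, β_{m'}], where k^{(p^g)} is the subfield of (p^g)-th powers. Here M_0 is defined recursively by M_0(p,m,n,0) = m and M_0(p,m,n,g+1) = M_0(p, m+n, n·p^{n+m}, g). -/
/-- The subring of `q`-th powers of `k` (for `q = p^g` and `k` of characteristic `p`
this is the subfield `k^{(q)}`). -/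
def pPowers (k : Type*) [CommRing k] (q : ℕ) : Subring k :=
  Subring.closure (Set.range fun x : k => x ^ q)

/-- A family `β` of elements of `k` is `p`-independent if the monomials in the `β i`
with all exponents `< p` are linearly independent over the subring `k^{(p)}` of
`p`-th powers. -/
def IsPIndep {k : Type*} [Field k] (p : ℕ) {ι : Type*} (β : ι → k) : Prop :=
  LinearIndependent (pPowers k p)
    (fun I : {f : ι →₀ ℕ // ∀ i, f i < p} => (I : ι →₀ ℕ).prod fun i n => β i ^ n)

/-- `M₀(p,m,n,0) = m`, `M₀(p,m,n,g+1) = M₀(p, m+n, n·p^{n+m}, g)`. -/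
def M0 (p : ℕ) : ℕ → ℕ → ℕ → ℕ
  | m, _, 0 => m
  | m, n, g + 1 => M0 p (m + n) (n * p ^ (n + m)) g

open Polynomial

section Aux

variable {k : Type*} [Field k] (p : ℕ) [Fact p.Prime] [CharP k p]

lemma pPowers_eq_range : pPowers k p = (frobenius k p).range := by
  have : (Set.range fun x : k => x ^ p) = ((frobenius k p).range : Set k) := by
    ext z; simp [frobenius_def, eq_comm]
  rw [pPowers, this, Subring.closure_eq]

lemma mem_pPowers_iff {z : k} : z ∈ pPowers k p ↔ ∃ y : k, y ^ p = z := by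
  rw [pPowers_eq_range]; exact ⟨fun ⟨y, hy⟩ => ⟨y, hy⟩, fun ⟨y, hy⟩ => ⟨y, hy⟩⟩

/-- The subring `k^{(p)}[S]` is in fact a subfield. -/
def subfieldClosure (S : Set k) : Subfield k where
  __ := Subring.closure ((Set.range fun y : k => y ^ p) ∪ S)
  inv_mem' := by
    intro z hz
    rcases eq_or_ne z 0 with rfl | hz0
    · simpa using Subring.zero_mem _
    have h1 : (z⁻¹) ^ p ∈ Subring.closure ((Set.range fun y : k => y ^ p) ∪ S) :=
      Subring.subset_closure (Or.inl ⟨z⁻¹, rfl⟩)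
    have h2 : z ^ (p - 1) * (z⁻¹) ^ p = z⁻¹ := by
      have hp1 : 1 ≤ p := (Fact.out (p := p.Prime)).one_lt.le
      have : (z⁻¹) ^ p = (z⁻¹) ^ (p - 1) * z⁻¹ := by
        conv_lhs => rw [show p = (p - 1) + 1 by omega]
        rw [pow_succ]
      rw [this, ← mul_assoc, ← mul_pow, mul_inv_cancel₀ hz0, one_pow, one_mul]
    show z⁻¹ ∈ Subring.closure ((Set.range fun y : k => y ^ p) ∪ S)
    rw [← h2]
    exact Subring.mul_mem _ (Subring.pow_mem _ hz _) h1

@[simp] lemma mem_subfieldClosure {S : Set k} {z : k} :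
    z ∈ subfieldClosure p S ↔
      z ∈ Subring.closure ((Set.range fun y : k => y ^ p) ∪ S) := Iff.rfl

/-- reindexing the monomial exponents -/
noncomputable def expEquiv (m : ℕ) : (Fin m → Fin p) ≃ {f : Fin m →₀ ℕ // ∀ i, f i < p} where
  toFun g := ⟨Finsupp.equivFunOnFinite.symm (fun i => (g i : ℕ)), fun i => by
    simpa using (g i).isLt⟩
  invFun f := fun i => ⟨(f : Fin m →₀ ℕ) i, f.2 i⟩
  left_inv g := by ext i; simp
  right_inv f := by ext i; simp

lemma isPIndep_iff {m : ℕ} (β : Fin m → k) :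
    IsPIndep p β ↔ LinearIndependent (pPowers k p)
      (fun g : Fin m → Fin p => ∏ i, β i ^ ((g i : ℕ))) := by
  have hfam : (fun I : {f : Fin m →₀ ℕ // ∀ i, f i < p} =>
      (I : Fin m →₀ ℕ).prod fun i n => β i ^ n) ∘ (expEquiv p m)
      = fun g : Fin m → Fin p => ∏ i, β i ^ ((g i : ℕ)) := by
    funext g
    rw [Function.comp_apply, Finsupp.prod_fintype _ _ (fun i => pow_zero _)]
    simp [expEquiv]
  rw [IsPIndep, ← linearIndependent_equiv (expEquiv p m), hfam]

end Aux

section Aux2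

variable {k : Type*} [Field k] (p : ℕ) [Fact p.Prime] [CharP k p]

lemma li_mul {ι κ : Type*} [Fintype ι] [Fintype κ] (F : Subring k) (K' : Subfield k)
    (hFK : ∀ z : F, (z : k) ∈ K') {v : ι → k} (hv : LinearIndependent F v)
    (hvK : ∀ i, v i ∈ K') {w : κ → k} (hw : LinearIndependent K' w) :
    LinearIndependent F (fun q : ι × κ => v q.1 * w q.2) := by
  rw [Fintype.linearIndependent_iff] at hv hw ⊢
  intro c hc q
  have hsmulF : ∀ (a : F) (z : k), a • z = (a : k) * z := fun a z => rfl
  have hsmulK : ∀ (a : K') (z : k), a • z = (a : k) * z := fun a z => rfl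
  have hmem : ∀ j, (∑ i, (c (i, j) : k) * v i) ∈ K' :=
    fun j => sum_mem fun i _ => K'.mul_mem (hFK _) (hvK i)
  have key : ∀ j, (∑ i, (c (i, j) : k) * v i) = 0 := by
    have h0 : ∑ j, (⟨∑ i, (c (i, j) : k) * v i, hmem j⟩ : K') • w j = 0 := by
      calc ∑ j, (⟨∑ i, (c (i, j) : k) * v i, hmem j⟩ : K') • w j
          = ∑ j, ∑ i, (c (i, j) : k) * (v i * w j) := by
            refine Finset.sum_congr rfl fun j _ => ?_
            rw [hsmulK, Finset.sum_mul]
            exact Finset.sum_congr rfl fun i _ => (mul_assoc _ _ _)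
        _ = ∑ i, ∑ j, (c (i, j) : k) * (v i * w j) := Finset.sum_comm
        _ = ∑ q : ι × κ, c q • (v q.1 * w q.2) := by
            rw [Fintype.sum_prod_type]
            exact Finset.sum_congr rfl fun i _ =>
              Finset.sum_congr rfl fun j _ => (hsmulF _ _).symm
        _ = 0 := hc
    intro j
    have := hw _ h0 j
    exact congrArg Subtype.val this
  have : ∀ j i, c (i, j) = 0 := fun j => hv (fun i => c (i, j)) (key j)
  exact this q.2 q.1

lemma linearIndependent_powers {K' : Subfield k} {x : k} (hx : x ∉ K') (hxp : x ^ p ∈ K') :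
    LinearIndependent K' (fun t : Fin p => x ^ (t : ℕ)) := by
  have hp : p.Prime := Fact.out
  have hq : Polynomial.aeval x ((X : K'[X]) ^ p - C (⟨x ^ p, hxp⟩ : K')) = 0 := by
    simp only [map_sub, map_pow, aeval_X, aeval_C]
    show x ^ p - ((⟨x ^ p, hxp⟩ : K') : k) = 0
    simp
  have hint : IsIntegral K' x :=
    ⟨(X : K'[X]) ^ p - C (⟨x ^ p, hxp⟩ : K'), monic_X_pow_sub_C _ hp.ne_zero, hq⟩
  have hdvd : (minpoly K' x).map (algebraMap K' k) ∣ ((X : k[X]) - C x) ^ p := by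
    have hmapq : ((X : K'[X]) ^ p - C (⟨x ^ p, hxp⟩ : K')).map (algebraMap K' k)
        = ((X : k[X]) - C x) ^ p := by
      rw [Polynomial.map_sub, Polynomial.map_pow, map_X, map_C, sub_pow_char, ← C_pow]
      rfl
    rw [← hmapq]
    exact Polynomial.map_dvd _ (minpoly.dvd _ _ hq)
  obtain ⟨j, hjp, hassoc⟩ := (dvd_prime_pow (prime_X_sub_C x) p).mp hdvd
  have hmap : (minpoly K' x).map (algebraMap K' k) = ((X : k[X]) - C x) ^ j :=
    eq_of_monic_of_associated ((minpoly.monic hint).map _) ((monic_X_sub_C x).pow j) hassoc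
  have hdeg : (minpoly K' x).natDegree = j := by
    have h1 := (minpoly.monic hint).natDegree_map (algebraMap K' k)
    rw [hmap] at h1
    rw [← h1, natDegree_pow, natDegree_X_sub_C, mul_one]
  have hx0 : x ≠ 0 := fun h => hx (h ▸ K'.zero_mem)
  have hjeq : j = p := by
    by_contra hne
    have hjlt : j < p := lt_of_le_of_ne hjp hne
    have hj1 : 1 ≤ j := by
      have := minpoly.natDegree_pos hint
      omega
    -- the constant coefficient gives x ^ j ∈ K'
    have hconst : ((-x) ^ j) ∈ K' := by
      have h2 : ((minpoly K' x).map (algebraMap K' k)).coeff 0 = (-x) ^ j := by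
        rw [hmap, coeff_zero_eq_eval_zero]
        simp
      have h3 : ((minpoly K' x).map (algebraMap K' k)).coeff 0
          = (((minpoly K' x).coeff 0 : K') : k) := coeff_map _ _
      rw [h3] at h2
      exact h2 ▸ ((minpoly K' x).coeff 0).2
    have hxj : x ^ j ∈ K' := by
      have h4 : ((-1 : k) ^ j) * ((-x) ^ j) = x ^ j := by
        rw [← mul_pow]
        norm_num
      exact h4 ▸ K'.mul_mem (K'.pow_mem (K'.neg_mem K'.one_mem) j) hconst
    -- Bezout: gcd p j = 1
    have hcop : Nat.Coprime p j := (Nat.Prime.coprime_iff_not_dvd hp).2 (by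
      intro hdvd
      exact absurd (Nat.le_of_dvd (by omega) hdvd) (by omega))
    set a := Nat.gcdA p j
    set b := Nat.gcdB p j
    have hbez : (p : ℤ) * a + (j : ℤ) * b = 1 := by
      have h5 := Nat.gcd_eq_gcd_ab p j
      rw [hcop] at h5
      push_cast at h5 ⊢
      linarith
    have hxin : x = (x ^ p) ^ a * (x ^ j) ^ b := by
      rw [← zpow_natCast x p, ← zpow_natCast x j, ← zpow_mul, ← zpow_mul,
        ← zpow_add₀ hx0, hbez, zpow_one]
    exact hx (hxin ▸ K'.mul_mem (K'.zpow_mem hxp a) (K'.zpow_mem hxj b))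
  have hfin := linearIndependent_pow (K := K') (S := k) x
  rw [hdeg, hjeq] at hfin
  exact hfin

end Aux2

section Aux3

variable {k : Type*} [Field k] (p : ℕ) [Fact p.Prime] [CharP k p]

def snocEquiv (p m : ℕ) : ((Fin m → Fin p) × Fin p) ≃ (Fin (m + 1) → Fin p) where
  toFun q := Fin.snoc q.1 q.2
  invFun h := (fun i => h i.castSucc, h (Fin.last m))
  left_inv q := by
    ext
    · simp [Fin.snoc_castSucc]
    · simp [Fin.snoc_last]
  right_inv h := Fin.snoc_init_self h

lemma pIndep_snoc {m : ℕ} {β : Fin m → k}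
    (hβ : LinearIndependent (pPowers k p) (fun g : Fin m → Fin p => ∏ i, β i ^ ((g i : ℕ))))
    {x : k}
    (hx : x ∉ Subring.closure ((Set.range fun y : k => y ^ p) ∪ Set.range β)) :
    LinearIndependent (pPowers k p)
      (fun g : Fin (m + 1) → Fin p =>
        ∏ i, (Fin.snoc β x : Fin (m + 1) → k) i ^ ((g i : ℕ))) := by
  set K' := subfieldClosure p (Set.range β) with hK'
  have hxK : x ∉ K' := hx
  have hxp : x ^ p ∈ K' := Subring.subset_closure (Or.inl ⟨x, rfl⟩)
  have hw := linearIndependent_powers p hxK hxp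
  have hFK : ∀ z : pPowers k p, (z : k) ∈ K' :=
    fun z => Subring.closure_mono Set.subset_union_left z.2
  have hvK : ∀ g : Fin m → Fin p, (∏ i, β i ^ ((g i : ℕ))) ∈ K' := by
    intro g
    refine Subfield.prod_mem _ fun i _ => Subfield.pow_mem _ ?_ _
    exact Subring.subset_closure (Or.inr ⟨i, rfl⟩)
  have hli := li_mul (pPowers k p) K' hFK hβ hvK hw
  have hfam : (fun g : Fin (m + 1) → Fin p =>
        ∏ i, (Fin.snoc β x : Fin (m + 1) → k) i ^ ((g i : ℕ)))
        ∘ (snocEquiv p m)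
      = fun q : (Fin m → Fin p) × Fin p =>
          (∏ i, β i ^ ((q.1 i : ℕ))) * x ^ ((q.2 : ℕ)) := by
    funext q
    show ∏ i, (Fin.snoc β x : Fin (m + 1) → k) i ^
      (((Fin.snoc q.1 q.2 : Fin (m + 1) → Fin p) i : ℕ)) = _
    rw [Fin.prod_univ_castSucc]
    congr 1
    · exact Finset.prod_congr rfl fun i _ => by rw [Fin.snoc_castSucc, Fin.snoc_castSucc]
    · rw [Fin.snoc_last, Fin.snoc_last]
  rw [← hfam] at hli
  exact (linearIndependent_equiv (snocEquiv p m)).mp hli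

lemma monomial_mem_span {m : ℕ} (β : Fin m → k) (f : Fin m → ℕ) :
    (∏ i, β i ^ f i) ∈ Submodule.span (pPowers k p)
      (Set.range fun g : Fin m → Fin p => ∏ i, β i ^ ((g i : ℕ))) := by
  have hp : 0 < p := (Fact.out (p := p.Prime)).pos
  have hsplit : (∏ i, β i ^ f i)
      = (∏ i, β i ^ (f i / p)) ^ p * ∏ i, β i ^ (f i % p) := by
    rw [← Finset.prod_pow, ← Finset.prod_mul_distrib]
    refine Finset.prod_congr rfl fun i _ => ?_
    rw [← pow_mul, ← pow_add]
    congr 1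
    rw [mul_comm]
    exact (Nat.div_add_mod (f i) p).symm
  have h1 : (∏ i, β i ^ (f i % p)) ∈ Submodule.span (pPowers k p)
      (Set.range fun g : Fin m → Fin p => ∏ i, β i ^ ((g i : ℕ))) :=
    Submodule.subset_span ⟨fun i => (⟨f i % p, Nat.mod_lt _ hp⟩ : Fin p), rfl⟩
  have h2 := Submodule.smul_mem _
    (⟨(∏ i, β i ^ (f i / p)) ^ p, (mem_pPowers_iff p).2 ⟨_, rfl⟩⟩ : pPowers k p) h1
  rw [hsplit]
  exact h2

lemma closure_subset_span {m : ℕ} (β : Fin m → k) {z : k}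
    (hz : z ∈ Subring.closure ((Set.range fun y : k => y ^ p) ∪ Set.range β)) :
    z ∈ Submodule.span (pPowers k p)
      (Set.range fun g : Fin m → Fin p => ∏ i, β i ^ ((g i : ℕ))) := by
  set W := Submodule.span (pPowers k p)
      (Set.range fun g : Fin m → Fin p => ∏ i, β i ^ ((g i : ℕ))) with hW
  have hone : (1 : k) ∈ W := by
    have := monomial_mem_span p β (fun _ => 0)
    simpa using this
  have hmulW : ∀ a ∈ W, ∀ b ∈ W, a * b ∈ W := by
    have hWW : W * W ≤ W := by
      rw [hW, Submodule.span_mul_span]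
      refine Submodule.span_le.2 ?_
      rintro _ ⟨_, ⟨g, rfl⟩, _, ⟨g', rfl⟩, rfl⟩
      show ((∏ i, β i ^ ((g i : ℕ))) * ∏ i, β i ^ ((g' i : ℕ))) ∈ _
      have : (∏ i, β i ^ ((g i : ℕ))) * ∏ i, β i ^ ((g' i : ℕ))
          = ∏ i, β i ^ ((g i : ℕ) + (g' i : ℕ)) := by
        rw [← Finset.prod_mul_distrib]
        exact Finset.prod_congr rfl fun i _ => (pow_add _ _ _).symm
      rw [this]
      exact monomial_mem_span p β _
    exact fun a ha b hb => hWW (Submodule.mul_mem_mul ha hb)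
  induction hz using Subring.closure_induction with
  | mem z hz =>
    rcases hz with ⟨y, rfl⟩ | ⟨j, rfl⟩
    · show (y : k) ^ p ∈ W
      have : (y : k) ^ p = (⟨y ^ p, (mem_pPowers_iff p).2 ⟨y, rfl⟩⟩ : pPowers k p) • (1 : k) := by
        show _ = y ^ p * 1
        rw [mul_one]
      rw [this]
      exact Submodule.smul_mem _ _ hone
    · have : β j = ∏ i, β i ^ (if i = j then 1 else 0) := by
        simp [pow_ite, Finset.prod_ite_eq']
      rw [this]
      exact monomial_mem_span p β _
  | one => exact hone
  | zero => exact W.zero_mem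
  | add _ _ _ _ ha hb => exact W.add_mem ha hb
  | neg _ _ ha => exact W.neg_mem ha
  | mul a b _ _ ha hb => exact hmulW _ ha _ hb

lemma exists_rep {m : ℕ} (β : Fin m → k) {z : k}
    (hz : z ∈ Subring.closure ((Set.range fun y : k => y ^ p) ∪ Set.range β)) :
    ∃ c : (Fin m → Fin p) → k, z = ∑ g : Fin m → Fin p, (c g) ^ p * ∏ i, β i ^ ((g i : ℕ)) := by
  obtain ⟨c, hc⟩ := (Submodule.mem_span_range_iff_exists_fun _).1 (closure_subset_span p β hz)
  choose y hy using fun g => (mem_pPowers_iff p).1 (c g).2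
  refine ⟨y, ?_⟩
  rw [← hc]
  refine Finset.sum_congr rfl fun g _ => ?_
  show ((c g : k)) * _ = _
  rw [hy g]

end Aux3

section Aux4

variable {k : Type*} [Field k] (p : ℕ) [Fact p.Prime] [CharP k p]

lemma step_one {m : ℕ} (β : Fin m → k)
    (hβ : LinearIndependent (pPowers k p) (fun g : Fin m → Fin p => ∏ i, β i ^ ((g i : ℕ))))
    {n : ℕ} (x : Fin n → k) :
    ∃ (m' : ℕ) (hm : m ≤ m') (β' : Fin m' → k),
      m' ≤ m + n ∧ (∀ i : Fin m, β' (Fin.castLE hm i) = β i) ∧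
      LinearIndependent (pPowers k p) (fun g : Fin m' → Fin p => ∏ i, β' i ^ ((g i : ℕ))) ∧
      ∀ i, x i ∈ Subring.closure ((Set.range fun y : k => y ^ p) ∪ Set.range β') := by
  induction n with
  | zero =>
    exact ⟨m, le_rfl, β, by omega, fun i => by congr, hβ, fun i => i.elim0⟩
  | succ n ih =>
    obtain ⟨m₂, hm₂, β₂, hb1, hb2, hb3, hb4⟩ := ih (fun i => x i.succ)
    by_cases hx0 : x 0 ∈ Subring.closure ((Set.range fun y : k => y ^ p) ∪ Set.range β₂)
    · refine ⟨m₂, hm₂, β₂, by omega, hb2, hb3, ?_⟩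
      intro i
      rcases Fin.eq_zero_or_eq_succ i with rfl | ⟨j, rfl⟩
      · exact hx0
      · exact hb4 j
    · refine ⟨m₂ + 1, by omega, Fin.snoc β₂ (x 0), by omega, ?_, ?_, ?_⟩
      · intro i
        have hcast : Fin.castLE (show m ≤ m₂ + 1 by omega) i
            = Fin.castSucc (Fin.castLE hm₂ i) := by
          ext; simp
        rw [hcast, Fin.snoc_castSucc, hb2]
      · exact pIndep_snoc p hb3 hx0
      · intro i
        rcases Fin.eq_zero_or_eq_succ i with rfl | ⟨j, rfl⟩
        · refine Subring.subset_closure (Or.inr ⟨Fin.last m₂, ?_⟩)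
          exact Fin.snoc_last _ _
        · refine Subring.closure_mono (Set.union_subset_union_right _ ?_) (hb4 j)
          rintro _ ⟨i', rfl⟩
          exact ⟨Fin.castSucc i', Fin.snoc_castSucc _ _ _⟩

end Aux4

lemma M0_mono (p : ℕ) (hp : 1 ≤ p) :
    ∀ (g m₁ n₁ m₂ n₂ : ℕ), m₁ ≤ m₂ → n₁ ≤ n₂ → M0 p m₁ n₁ g ≤ M0 p m₂ n₂ g
  | 0, _, _, _, _, hm, _ => by simpa [M0] using hm
  | g + 1, m₁, n₁, m₂, n₂, hm, hn => by
    show M0 p (m₁ + n₁) (n₁ * p ^ (n₁ + m₁)) g ≤ M0 p (m₂ + n₂) (n₂ * p ^ (n₂ + m₂)) g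
    exact M0_mono p hp g _ _ _ _ (by omega)
      (Nat.mul_le_mul hn (Nat.pow_le_pow_right hp (by omega)))

section Aux5

variable {k : Type*} [Field k] (p : ℕ) [Fact p.Prime] [CharP k p]

lemma aux_main (g : ℕ) : ∀ (m n : ℕ) (β : Fin m → k),
    LinearIndependent (pPowers k p) (fun g : Fin m → Fin p => ∏ i, β i ^ ((g i : ℕ))) →
    ∀ x : Fin n → k,
    ∃ (m' : ℕ) (hm : m ≤ m') (β' : Fin m' → k),
      m' ≤ M0 p m n g ∧ (∀ i : Fin m, β' (Fin.castLE hm i) = β i) ∧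
      LinearIndependent (pPowers k p) (fun g : Fin m' → Fin p => ∏ i, β' i ^ ((g i : ℕ))) ∧
      ∀ i, x i ∈ Subring.closure ((Set.range fun y : k => y ^ (p ^ g)) ∪ Set.range β') := by
  induction g with
  | zero =>
    intro m n β hβ x
    refine ⟨m, le_rfl, β, by simp [M0], fun i => by congr, hβ, fun i => ?_⟩
    exact Subring.subset_closure (Or.inl ⟨x i, by simp⟩)
  | succ g ih =>
    intro m n β hβ x
    obtain ⟨m₂, hm₂, β₂, hb1, hb2, hb3, hb4⟩ := step_one p β hβ x
    choose c hc using fun i => exists_rep p β₂ (hb4 i)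
    set N := Fintype.card (Fin n × (Fin m₂ → Fin p)) with hN
    let e := Fintype.equivFin (Fin n × (Fin m₂ → Fin p))
    let X : Fin N → k := fun j => c (e.symm j).1 (e.symm j).2
    obtain ⟨m₃, hm₃, β₃, hc1, hc2, hc3, hc4⟩ := ih m₂ N β₂ hb3 X
    have hNval : N = n * p ^ m₂ := by
      simp [hN]
    refine ⟨m₃, le_trans hm₂ hm₃, β₃, ?_, ?_, hc3, ?_⟩
    · calc m₃ ≤ M0 p m₂ N g := hc1
        _ ≤ M0 p (m + n) (n * p ^ (n + m)) g := by
            refine M0_mono p (Fact.out (p := p.Prime)).one_lt.le g _ _ _ _ (by omega) ?_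
            rw [hNval]
            exact Nat.mul_le_mul_left _
              (Nat.pow_le_pow_right (Fact.out (p := p.Prime)).one_lt.le (by omega))
        _ = M0 p m n (g + 1) := rfl
    · intro i
      have hcast : Fin.castLE (le_trans hm₂ hm₃) i = Fin.castLE hm₃ (Fin.castLE hm₂ i) := by
        ext; simp
      rw [hcast, hc2, hb2]
    · intro i
      rw [hc i]
      refine Subring.sum_mem _ fun gexp _ => Subring.mul_mem _ ?_ ?_
      · -- (c i gexp) ^ p ∈ closure for p ^ (g+1)
        have hmem : c i gexp ∈ Subring.closure
            ((Set.range fun y : k => y ^ (p ^ g)) ∪ Set.range β₃) := by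
          have h5 := hc4 (e (i, gexp))
          simpa [X, e.symm_apply_apply] using h5
        have hmap : (Subring.closure
              ((Set.range fun y : k => y ^ (p ^ g)) ∪ Set.range β₃)).map (frobenius k p)
            ≤ Subring.closure ((Set.range fun y : k => y ^ (p ^ (g + 1))) ∪ Set.range β₃) := by
          rw [RingHom.map_closure]
          refine Subring.closure_le.2 ?_
          rintro _ ⟨z, hz, rfl⟩
          rcases hz with ⟨y, rfl⟩ | ⟨j, rfl⟩
          · refine Subring.subset_closure (Or.inl ⟨y, ?_⟩)
            rw [frobenius_def, ← pow_mul, pow_succ]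
          · rw [frobenius_def]
            refine Subring.pow_mem _ ?_ p
            exact Subring.subset_closure (Or.inr ⟨j, rfl⟩)
        have h6 := hmap ⟨_, hmem, rfl⟩
        rwa [frobenius_def] at h6
      · refine Subring.prod_mem _ fun j _ => Subring.pow_mem _ ?_ _
        exact Subring.subset_closure (Or.inr ⟨Fin.castLE hm₃ j, hc2 j⟩)

end Aux5

/-- **Bounded extension of a `p`-independent family** (Lemma
`lem:pick-p-indep-to-expand`).  Let `k` be a field of characteristic `p`, `g ≥ 0`, and
`β₁, …, β_m ∈ k` `p`-independent.  Given `x₁, …, x_n ∈ k`, the list can be extended to a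
`p`-independent list `β₁, …, β_{m'}` with `m' ≤ M₀(p,m,n,g)` such that each `x_i` lies
in the subring `k^{(p^g)}[β₁, …, β_{m'}]`. -/
theorem extend_p_independent_bounded
    {k : Type*} [Field k] (p : ℕ) [Fact p.Prime] [CharP k p] (g m n : ℕ)
    (β : Fin m → k) (hβ : IsPIndep p β) (x : Fin n → k) :
    ∃ (m' : ℕ) (hm : m ≤ m') (β' : Fin m' → k),
      m' ≤ M0 p m n g ∧
      (∀ i : Fin m, β' (Fin.castLE hm i) = β i) ∧
      IsPIndep p β' ∧
      ∀ i, x i ∈ Subring.closure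
        ((Set.range fun y : k => y ^ (p ^ g)) ∪ Set.range β') := by
  rw [isPIndep_iff] at hβ
  obtain ⟨m', hm, β', h1, h2, h3, h4⟩ := aux_main p g m n β hβ x
  exact ⟨m', hm, β', h1, h2, (isPIndep_iff p β').2 h3, h4⟩
end

section
/- Let p = 2, and let K be a complete unramified discretely valued field of mixed characteristic (0,2) with residue field 𝔽₂(s,t), where s, t are algebraically independent over 𝔽₂. Let b_s, b_t ∈ O_v be lifts of s, t. Then the field L = K(√b_s, √b_t) does not contain a square root of b_s + b_t, even though in the residue field of L (which is 𝔽₂(√s, √t)) the element s + t does have a square root, namely √s + √t. -/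
open MvPolynomial

section Key

variable {K L : Type*} [Field K] [Field L] [Algebra K L]

/-- 1 and x are linearly independent over K when x² = u is a nonsquare. -/
private lemma stepA (u : K) (x : L) (hx : x ^ 2 = algebraMap K L u)
    (h1 : ∀ c : K, c ^ 2 ≠ u) {e f : K}
    (h : algebraMap K L e + algebraMap K L f * x = 0) : e = 0 ∧ f = 0 := by
  have inj := (algebraMap K L).injective
  by_cases hf : f = 0
  · subst hf
    refine ⟨inj ?_, rfl⟩
    simpa using h
  · exfalso
    have hfL : algebraMap K L f ≠ 0 := fun hh => hf (inj (by simpa using hh))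
    have hx' : x = algebraMap K L (-(e / f)) := by
      rw [map_neg, map_div₀]
      field_simp
      linear_combination h
    apply h1 (-(e / f))
    apply inj
    rw [map_pow, ← hx', hx]

/-- no element of K + K·x squares to w, given the nonsquare conditions. -/
private lemma stepB (u : K) (x : L) (hx : x ^ 2 = algebraMap K L u)
    (h2K : (2 : K) ≠ 0)
    (h1 : ∀ c : K, c ^ 2 ≠ u) (w : K) (hw : ∀ c : K, c ^ 2 ≠ w)
    (huw : ∀ c : K, c ^ 2 ≠ u * w) (e f : K) :
    (algebraMap K L e + algebraMap K L f * x) ^ 2 ≠ algebraMap K L w := by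
  intro h
  have key : algebraMap K L (e ^ 2 + f ^ 2 * u - w) + algebraMap K L (2 * e * f) * x = 0 := by
    simp only [map_add, map_sub, map_mul, map_pow, map_ofNat]
    linear_combination h - (algebraMap K L f) ^ 2 * hx
  obtain ⟨hA, hB⟩ := stepA u x hx h1 key
  have hef : e = 0 ∨ f = 0 := by
    rcases mul_eq_zero.mp hB with h' | h'
    · rcases mul_eq_zero.mp h' with h'' | h''
      · exact absurd h'' h2K
      · exact Or.inl h''
    · exact Or.inr h'
  rcases hef with he | hf
  · subst he
    exact huw (f * u) (by linear_combination u * hA)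
  · subst hf
    exact hw e (by linear_combination hA)

/-- 1, x, y, xy are linearly independent over K. -/
private lemma stepC (u v : K) (x y : L) (hx : x ^ 2 = algebraMap K L u)
    (hy : y ^ 2 = algebraMap K L v) (h2K : (2 : K) ≠ 0)
    (h1 : ∀ c : K, c ^ 2 ≠ u) (h2 : ∀ c : K, c ^ 2 ≠ v) (h3 : ∀ c : K, c ^ 2 ≠ u * v)
    {e f g h : K}
    (hrel : algebraMap K L e + algebraMap K L f * x + algebraMap K L g * y
      + algebraMap K L h * (x * y) = 0) : e = 0 ∧ f = 0 ∧ g = 0 ∧ h = 0 := by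
  set i := algebraMap K L with hi
  by_cases hβ : i g + i h * x = 0
  · obtain ⟨hg, hh⟩ := stepA u x hx h1 hβ
    have hα : i e + i f * x = 0 := by
      rw [hi] at hβ ⊢
      linear_combination hrel - y * hβ
    obtain ⟨he, hf⟩ := stepA u x hx h1 hα
    exact ⟨he, hf, hg, hh⟩
  · exfalso
    have hαβ : (i e + i f * x) ^ 2 = i v * (i g + i h * x) ^ 2 := by
      have hy' : i e + i f * x = -((i g + i h * x) * y) := by linear_combination hrel
      rw [hy', neg_sq, mul_pow, hy]
      ring
    have hN : g ^ 2 - h ^ 2 * u ≠ 0 := by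
      intro hN0
      by_cases hh : h = 0
      · subst hh
        have hg : g = 0 := by
          have hg2 : g ^ 2 = 0 := by linear_combination hN0
          exact pow_eq_zero_iff (two_ne_zero) |>.mp hg2
        subst hg
        apply hβ
        simp
      · exact h1 (g / h) (by field_simp; linear_combination hN0)
    set N := g ^ 2 - h ^ 2 * u with hNdef
    have hprod : (i g + i h * x) * (i g - i h * x) = i N := by
      rw [hi, hNdef]
      simp only [map_sub, map_mul, map_pow]
      linear_combination (-(algebraMap K L h) ^ 2) * hx
    have hiN : i N ≠ 0 := fun hh => hN ((algebraMap K L).injective (by simpa using hh))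
    set e' := (e * g - f * h * u) / N with he'
    set f' := (f * g - e * h) / N with hf'
    have hmulN : (i e' + i f' * x) * i N = (i e + i f * x) * (i g - i h * x) := by
      have h1' : e' * N = e * g - f * h * u := by rw [he']; field_simp
      have h2' : f' * N = f * g - e * h := by rw [hf']; field_simp
      have expand : (i e + i f * x) * (i g - i h * x)
          = i (e * g - f * h * u) + i (f * g - e * h) * x := by
        rw [hi]; simp only [map_sub, map_mul]
        linear_combination (-(algebraMap K L f) * (algebraMap K L h)) * hx
      rw [expand, ← h1', ← h2', hi]
      simp only [map_mul]
      ring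
    have hγ : (i e' + i f' * x) ^ 2 = i v := by
      have hsq : (i e' + i f' * x) ^ 2 * (i N) ^ 2 = i v * (i N) ^ 2 := by
        calc (i e' + i f' * x) ^ 2 * (i N) ^ 2
            = ((i e' + i f' * x) * i N) ^ 2 := by ring
          _ = ((i e + i f * x) * (i g - i h * x)) ^ 2 := by rw [hmulN]
          _ = (i e + i f * x) ^ 2 * (i g - i h * x) ^ 2 := by ring
          _ = i v * ((i g + i h * x) * (i g - i h * x)) ^ 2 := by rw [hαβ]; ring
          _ = i v * (i N) ^ 2 := by rw [hprod]
      exact mul_right_cancel₀ (pow_ne_zero 2 hiN) hsq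
    exact stepB u x hx h2K h1 v h2 h3 e' f' hγ

end Key

section Key2

variable {K L : Type*} [Field K] [Field L] [Algebra K L]

private lemma mem_span (u v : K) (x y : L) (hx : x ^ 2 = algebraMap K L u)
    (hy : y ^ 2 = algebraMap K L v) {z : L} (hz : z ∈ Algebra.adjoin K ({x, y} : Set L)) :
    ∃ a b c d : K, z = algebraMap K L a + algebraMap K L b * x + algebraMap K L c * y
      + algebraMap K L d * (x * y) := by
  induction hz using Algebra.adjoin_induction with
  | mem w hw =>
    rw [Set.mem_insert_iff, Set.mem_singleton_iff] at hw
    rcases hw with rfl | rfl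
    · exact ⟨0, 1, 0, 0, by simp⟩
    · exact ⟨0, 0, 1, 0, by simp⟩
  | algebraMap r => exact ⟨r, 0, 0, 0, by simp⟩
  | add z₁ z₂ _ _ ih₁ ih₂ =>
    obtain ⟨a, b, c, d, rfl⟩ := ih₁
    obtain ⟨a', b', c', d', rfl⟩ := ih₂
    exact ⟨a + a', b + b', c + c', d + d', by simp only [map_add]; ring⟩
  | mul z₁ z₂ _ _ ih₁ ih₂ =>
    obtain ⟨a, b, c, d, rfl⟩ := ih₁
    obtain ⟨a', b', c', d', rfl⟩ := ih₂
    refine ⟨a * a' + b * b' * u + c * c' * v + d * d' * (u * v),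
      a * b' + a' * b + (c * d' + c' * d) * v,
      a * c' + a' * c + (b * d' + b' * d) * u,
      a * d' + a' * d + b * c' + b' * c, ?_⟩
    simp only [map_add, map_mul]
    linear_combination (algebraMap K L b * algebraMap K L b'
        + (algebraMap K L b * algebraMap K L d' + algebraMap K L d * algebraMap K L b') * y
        + algebraMap K L d * algebraMap K L d' * y ^ 2) * hx
      + (algebraMap K L c * algebraMap K L c'
        + (algebraMap K L c * algebraMap K L d' + algebraMap K L d * algebraMap K L c') * x
        + algebraMap K L u * algebraMap K L d * algebraMap K L d') * hy

/-- The key field-theoretic lemma. -/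
private lemma keyLemma (u v : K) (x y : L) (hx : x ^ 2 = algebraMap K L u)
    (hy : y ^ 2 = algebraMap K L v) (h2K : (2 : K) ≠ 0)
    (h1 : ∀ c : K, c ^ 2 ≠ u) (h2 : ∀ c : K, c ^ 2 ≠ v) (h3 : ∀ c : K, c ^ 2 ≠ u * v)
    (h4 : ∀ c : K, c ^ 2 ≠ u + v) (h5 : ∀ c : K, c ^ 2 ≠ (u + v) * u)
    (h6 : ∀ c : K, c ^ 2 ≠ (u + v) * v) (h7 : ∀ c : K, c ^ 2 ≠ (u + v) * (u * v))
    (hL : IntermediateField.adjoin K {x, y} = ⊤) (z : L) :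
    z ^ 2 ≠ algebraMap K L (u + v) := by
  intro hzsq
  set i := algebraMap K L with hi
  -- z is in the algebra adjoin
  have hxalg : IsAlgebraic K x :=
    ⟨Polynomial.X ^ 2 - Polynomial.C u, by
      intro hP
      have := congrArg (Polynomial.coeff · 2) hP
      simp [Polynomial.coeff_X_pow] at this, by simp [hx, hi]⟩
  have hyalg : IsAlgebraic K y :=
    ⟨Polynomial.X ^ 2 - Polynomial.C v, by
      intro hP
      have := congrArg (Polynomial.coeff · 2) hP
      simp [Polynomial.coeff_X_pow] at this, by simp [hy, hi]⟩
  have halg : ∀ w ∈ ({x, y} : Set L), IsAlgebraic K w := by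
    rintro w (rfl | rfl)
    exacts [hxalg, hyalg]
  have hzmem : z ∈ Algebra.adjoin K ({x, y} : Set L) := by
    rw [← IntermediateField.adjoin_toSubalgebra_of_isAlgebraic halg, hL]
    trivial
  obtain ⟨a, b, c, d, rfl⟩ := mem_span u v x y hx hy hzmem
  have main : i (a ^ 2 + b ^ 2 * u + c ^ 2 * v + d ^ 2 * (u * v) - (u + v))
      + i (2 * (a * b + c * d * v)) * x + i (2 * (a * c + b * d * u)) * y
      + i (2 * (a * d + b * c)) * (x * y) = 0 := by
    rw [hi]
    simp only [map_add, map_sub, map_mul, map_pow, map_ofNat]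
    rw [hi, map_add] at hzsq
    linear_combination hzsq - (algebraMap K L b ^ 2
        + 2 * algebraMap K L b * algebraMap K L d * y
        + algebraMap K L d ^ 2 * y ^ 2) * hx
      - (algebraMap K L c ^ 2 + 2 * algebraMap K L c * algebraMap K L d * x
        + algebraMap K L u * algebraMap K L d ^ 2) * hy
  obtain ⟨eq1, eqB, eqC, eqD⟩ := stepC u v x y hx hy h2K h1 h2 h3 main
  have eq2 : a * b + c * d * v = 0 := by
    rcases mul_eq_zero.mp eqB with h' | h'
    · exact absurd h' h2K
    · exact h'
  have eq3 : a * c + b * d * u = 0 := by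
    rcases mul_eq_zero.mp eqC with h' | h'
    · exact absurd h' h2K
    · exact h'
  have eq4 : a * d + b * c = 0 := by
    rcases mul_eq_zero.mp eqD with h' | h'
    · exact absurd h' h2K
    · exact h'
  have hu0 : u ≠ 0 := fun h0 => h1 0 (by simp [h0])
  have hv0 : v ≠ 0 := fun h0 => h2 0 (by simp [h0])
  by_cases ha : a = 0
  · -- a = 0
    subst ha
    have hbc : b * c = 0 := by linear_combination eq4
    by_cases hb : b = 0
    · subst hb
      by_cases hc : c = 0
      · subst hc
        exact h7 (d * u * v) (by linear_combination (u * v) * eq1)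
      · have hd : d = 0 := by
          rcases mul_eq_zero.mp (show c * (d * v) = 0 by linear_combination eq2) with h' | h'
          · exact absurd h' hc
          · rcases mul_eq_zero.mp h' with h'' | h''
            · exact h''
            · exact absurd h'' hv0
        subst hd
        exact h6 (c * v) (by linear_combination v * eq1)
    · have hc : c = 0 := by
        rcases mul_eq_zero.mp hbc with h' | h'
        · exact absurd h' hb
        · exact h'
      subst hc
      have hd : d = 0 := by
        rcases mul_eq_zero.mp (show b * (d * u) = 0 by linear_combination eq3) with h' | h'
        · exact absurd h' hb
        · rcases mul_eq_zero.mp h' with h'' | h''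
          · exact h''
          · exact absurd h'' hu0
      subst hd
      exact h5 (b * u) (by linear_combination u * eq1)
  · -- a ≠ 0
    have hb2 : b * (a ^ 2 - c ^ 2 * v) = 0 := by linear_combination a * eq2 - c * v * eq4
    have hb : b = 0 := by
      rcases mul_eq_zero.mp hb2 with h' | h'
      · exact h'
      · exfalso
        by_cases hc : c = 0
        · apply ha
          rw [hc] at h'
          have : a ^ 2 = 0 := by linear_combination h'
          exact pow_eq_zero_iff two_ne_zero |>.mp this
        · exact h2 (a / c) (by field_simp; linear_combination h')
    subst hb
    have hc : c = 0 := by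
      rcases mul_eq_zero.mp (show a * c = 0 by linear_combination eq3) with h' | h'
      · exact absurd h' ha
      · exact h'
    subst hc
    have hd : d = 0 := by
      rcases mul_eq_zero.mp (show a * d = 0 by linear_combination eq4) with h' | h'
      · exact absurd h' ha
      · exact h'
    subst hd
    exact h4 a (by linear_combination eq1)

end Key2

section Residue

private lemma polyNonsq {k : Type*} [Field k] [Algebra (ZMod 2) k] {s t : k}
    (hst : AlgebraicIndependent (ZMod 2) ![s, t])
    (hgen : Subfield.closure {s, t} = (⊤ : Subfield k))
    (P : MvPolynomial (Fin 2) (ZMod 2)) (n : Fin 2) (hP : pderiv n P ≠ 0) :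
    ∀ r : k, r ^ 2 ≠ MvPolynomial.aeval ![s, t] P := by
  intro r hr
  have hinj : Function.Injective (MvPolynomial.aeval (R := ZMod 2) ![s, t]) := hst
  have hrc : r ∈ Subfield.closure ({s, t} : Set k) := by rw [hgen]; trivial
  rw [Subfield.mem_closure_iff] at hrc
  obtain ⟨a, ha, b, hb, hab⟩ := hrc
  have hsub : Subring.closure ({s, t} : Set k)
      ≤ (MvPolynomial.aeval (R := ZMod 2) ![s, t]).range.toSubring := by
    apply Subring.closure_le.mpr
    intro w hw
    rw [Set.mem_insert_iff, Set.mem_singleton_iff] at hw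
    rcases hw with rfl | rfl
    · exact ⟨X 0, by simp⟩
    · exact ⟨X 1, by simp⟩
  obtain ⟨p, hp0⟩ := hsub ha
  obtain ⟨q, hq0'⟩ := hsub hb
  have hp : MvPolynomial.aeval (R := ZMod 2) ![s, t] p = a := hp0
  have hq : MvPolynomial.aeval (R := ZMod 2) ![s, t] q = b := hq0'
  by_cases hb0 : b = 0
  · rw [hb0, div_zero] at hab
    rw [← hab] at hr
    have hP0 : P = 0 := by
      apply hinj
      rw [map_zero]
      simpa using hr.symm
    apply hP
    rw [hP0]
    simp
  · have hq0 : q ≠ 0 := by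
      rintro rfl
      simp only [map_zero] at hq
      exact hb0 hq.symm
    have hr' : r * b = a := by rw [← hab]; field_simp
    have key : MvPolynomial.aeval (R := ZMod 2) ![s, t] (p ^ 2)
        = MvPolynomial.aeval ![s, t] (P * q ^ 2) := by
      calc MvPolynomial.aeval (R := ZMod 2) ![s, t] (p ^ 2) = a ^ 2 := by rw [map_pow, hp]
        _ = (r * b) ^ 2 := by rw [hr']
        _ = r ^ 2 * b ^ 2 := by ring
        _ = MvPolynomial.aeval ![s, t] P * (MvPolynomial.aeval ![s, t] q) ^ 2 := by rw [hr, hq]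
        _ = MvPolynomial.aeval ![s, t] (P * q ^ 2) := by rw [map_mul, map_pow]
    have hpq : p ^ 2 = P * q ^ 2 := hinj key
    have hder := congrArg (pderiv n) hpq
    have h2 : (2 : MvPolynomial (Fin 2) (ZMod 2)) = 0 := by
      have := CharP.cast_eq_zero (MvPolynomial (Fin 2) (ZMod 2)) 2
      exact_mod_cast this
    have hl : pderiv n (p ^ 2) = 2 * p * pderiv n p := by
      rw [pow_two, pderiv_mul]; ring
    have hrr : pderiv n (P * q ^ 2) = pderiv n P * q ^ 2 + 2 * (P * q) * pderiv n q := by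
      rw [pderiv_mul, pow_two, pderiv_mul]; ring
    rw [hl, hrr, h2] at hder
    simp only [zero_mul, mul_zero, zero_add, add_zero, mul_assoc] at hder
    rcases mul_eq_zero.mp hder.symm with h' | h'
    · exact hP h'
    · exact hq0 (pow_eq_zero_iff two_ne_zero |>.mp h')

private lemma liftNonsq {O : Type*} [CommRing O] [IsDomain O] [IsDiscreteValuationRing O]
    (m : O) (hres : ∀ r : IsLocalRing.ResidueField O, r ^ 2 ≠ IsLocalRing.residue O m) :
    ∀ c : FractionRing O, c ^ 2 ≠ algebraMap O (FractionRing O) m := by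
  intro c hc
  have hint : IsIntegral O c := by
    refine ⟨Polynomial.X ^ 2 - Polynomial.C m, Polynomial.monic_X_pow_sub_C m two_ne_zero, ?_⟩
    simp [hc]
  obtain ⟨a, ha⟩ := IsIntegrallyClosed.isIntegral_iff.mp hint
  have heq : algebraMap O (FractionRing O) (a ^ 2) = algebraMap O (FractionRing O) m := by
    rw [map_pow, ha, hc]
  exact hres (IsLocalRing.residue O a)
    (by rw [← map_pow, IsFractionRing.injective O (FractionRing O) heq])

end Residue

/-- **Failure of quantifier elimination, key computation** (Example `ex:qe-fails`).
Let `K` be a complete unramified discretely valued field of mixed characteristic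
`(0,2)` (here presented via its valuation ring `O`, a complete DVR with uniformizer `2`)
whose residue field is `𝔽₂(s,t)` with `s,t` algebraically independent.  Let
`b_s, b_t ∈ O` be lifts of `s, t`.  Then the field `L = K(√b_s, √b_t)` contains no
square root of `b_s + b_t` — even though in the residue field of `L` the element
`s + t` does have the square root `√s + √t` (in characteristic `2`,
`(√s + √t)² = s + t`). -/
theorem no_sqrt_of_sum_in_biquadratic_extension
    {O : Type*} [CommRing O] [IsDomain O] [IsDiscreteValuationRing O] [CharZero O]
    [IsAdicComplete (IsLocalRing.maximalIdeal O) O]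
    (h2 : Irreducible (2 : O))
    [CharP (IsLocalRing.ResidueField O) 2]
    [Algebra (ZMod 2) (IsLocalRing.ResidueField O)]
    (s t : IsLocalRing.ResidueField O)
    (hst : AlgebraicIndependent (ZMod 2) ![s, t])
    (hgen : Subfield.closure {s, t} = (⊤ : Subfield (IsLocalRing.ResidueField O)))
    (bs bt : O) (hbs : IsLocalRing.residue O bs = s) (hbt : IsLocalRing.residue O bt = t)
    {L : Type*} [Field L] [Algebra (FractionRing O) L]
    (x y : L)
    (hx : x ^ 2 = algebraMap (FractionRing O) L (algebraMap O (FractionRing O) bs))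
    (hy : y ^ 2 = algebraMap (FractionRing O) L (algebraMap O (FractionRing O) bt))
    (hL : IntermediateField.adjoin (FractionRing O) {x, y} = ⊤) :
    (¬ ∃ z : L, z ^ 2 =
        algebraMap (FractionRing O) L (algebraMap O (FractionRing O) (bs + bt))) ∧
    ∀ (k' : Type*) [Field k'] [CharP k' 2]
      (f : IsLocalRing.ResidueField O →+* k') (σ τ : k'),
      σ ^ 2 = f s → τ ^ 2 = f t → (σ + τ) ^ 2 = f (s + t) := by
  constructor
  · rintro ⟨z, hz⟩
    set K := FractionRing O with hK
    have h2K : (2 : K) ≠ 0 := by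
      intro h0
      have h2O : (2 : O) = 0 := IsFractionRing.injective O K (by rw [map_ofNat, map_zero, h0])
      norm_num at h2O
    -- generic nonsquare builder
    have hres : ∀ (m : O) (P : MvPolynomial (Fin 2) (ZMod 2)) (n : Fin 2),
        MvPolynomial.pderiv n P ≠ 0 →
        IsLocalRing.residue O m = MvPolynomial.aeval ![s, t] P →
        ∀ c : K, c ^ 2 ≠ algebraMap O K m := by
      intro m P n hP hm c hc
      exact liftNonsq m (fun r hr => polyNonsq hst hgen P n hP r (by rw [hr, hm])) c hc
    have ne10 : (1 : Fin 2) ≠ 0 := by decide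
    have ne01 : (0 : Fin 2) ≠ 1 := by decide
    have hP1 : MvPolynomial.pderiv (0 : Fin 2) (MvPolynomial.X 0 :
        MvPolynomial (Fin 2) (ZMod 2)) ≠ 0 := by
      simp [MvPolynomial.pderiv_X_self]
    have hP2 : MvPolynomial.pderiv (1 : Fin 2) (MvPolynomial.X 1 :
        MvPolynomial (Fin 2) (ZMod 2)) ≠ 0 := by
      simp [MvPolynomial.pderiv_X_self]
    have hP3 : MvPolynomial.pderiv (0 : Fin 2) ((MvPolynomial.X 0 * MvPolynomial.X 1 :
        MvPolynomial (Fin 2) (ZMod 2))) ≠ 0 := by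
      intro h
      have h' := congrArg (MvPolynomial.eval ![(0 : ZMod 2), 1]) h
      simp [MvPolynomial.pderiv_mul, MvPolynomial.pderiv_X_self,
        MvPolynomial.pderiv_X_of_ne ne10, MvPolynomial.pderiv_X_of_ne ne01] at h'
    have hP4 : MvPolynomial.pderiv (0 : Fin 2) ((MvPolynomial.X 0 + MvPolynomial.X 1 :
        MvPolynomial (Fin 2) (ZMod 2))) ≠ 0 := by
      intro h
      have h' := congrArg (MvPolynomial.eval ![(0 : ZMod 2), 1]) h
      simp [MvPolynomial.pderiv_X_self,
        MvPolynomial.pderiv_X_of_ne ne10, MvPolynomial.pderiv_X_of_ne ne01] at h'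
    have hP5 : MvPolynomial.pderiv (0 : Fin 2)
        (((MvPolynomial.X 0 + MvPolynomial.X 1) * MvPolynomial.X 0 :
        MvPolynomial (Fin 2) (ZMod 2))) ≠ 0 := by
      intro h
      have h' := congrArg (MvPolynomial.eval ![(0 : ZMod 2), 1]) h
      simp [MvPolynomial.pderiv_mul, MvPolynomial.pderiv_X_self,
        MvPolynomial.pderiv_X_of_ne ne10, MvPolynomial.pderiv_X_of_ne ne01] at h'
    have hP6 : MvPolynomial.pderiv (0 : Fin 2)
        (((MvPolynomial.X 0 + MvPolynomial.X 1) * MvPolynomial.X 1 :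
        MvPolynomial (Fin 2) (ZMod 2))) ≠ 0 := by
      intro h
      have h' := congrArg (MvPolynomial.eval ![(0 : ZMod 2), 1]) h
      simp [MvPolynomial.pderiv_mul, MvPolynomial.pderiv_X_self,
        MvPolynomial.pderiv_X_of_ne ne10, MvPolynomial.pderiv_X_of_ne ne01] at h'
    have hP7 : MvPolynomial.pderiv (0 : Fin 2)
        (((MvPolynomial.X 0 + MvPolynomial.X 1) * (MvPolynomial.X 0 * MvPolynomial.X 1) :
        MvPolynomial (Fin 2) (ZMod 2))) ≠ 0 := by
      intro h
      have h' := congrArg (MvPolynomial.eval ![(0 : ZMod 2), 1]) h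
      simp [MvPolynomial.pderiv_mul, MvPolynomial.pderiv_X_self,
        MvPolynomial.pderiv_X_of_ne ne10, MvPolynomial.pderiv_X_of_ne ne01] at h'
    have h1' := hres bs (MvPolynomial.X 0) 0 hP1 (by simp [hbs])
    have h2' := hres bt (MvPolynomial.X 1) 1 hP2 (by simp [hbt])
    have h3' := hres (bs * bt) (MvPolynomial.X 0 * MvPolynomial.X 1) 0 hP3
      (by simp [map_mul, hbs, hbt])
    have h4' := hres (bs + bt) (MvPolynomial.X 0 + MvPolynomial.X 1) 0 hP4
      (by simp [map_add, hbs, hbt])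
    have h5' := hres ((bs + bt) * bs) ((MvPolynomial.X 0 + MvPolynomial.X 1) * MvPolynomial.X 0) 0
      hP5 (by simp [map_mul, map_add, hbs, hbt])
    have h6' := hres ((bs + bt) * bt) ((MvPolynomial.X 0 + MvPolynomial.X 1) * MvPolynomial.X 1) 0
      hP6 (by simp [map_mul, map_add, hbs, hbt])
    have h7' := hres ((bs + bt) * (bs * bt))
      ((MvPolynomial.X 0 + MvPolynomial.X 1) * (MvPolynomial.X 0 * MvPolynomial.X 1)) 0
      hP7 (by simp [map_mul, map_add, hbs, hbt])
    refine keyLemma (algebraMap O K bs) (algebraMap O K bt) x y hx hy h2K h1' h2'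
      (fun c hc => h3' c (by rw [map_mul]; exact hc))
      (fun c hc => h4' c (by rw [map_add]; exact hc))
      (fun c hc => h5' c (by rw [map_mul, map_add]; exact hc))
      (fun c hc => h6' c (by rw [map_mul, map_add]; exact hc))
      (fun c hc => h7' c (by rw [map_mul, map_mul, map_add]; exact hc))
      hL z ?_
    rw [map_add] at hz
    exact hz
  · intro k' _ _ f σ τ hσ hτ
    have h2' : (2 : k') = 0 := by
      have := CharP.cast_eq_zero k' 2
      exact_mod_cast this
    rw [map_add, ← hσ, ← hτ]
    linear_combination σ * τ * h2'
end

section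
/- Let n > e be a natural number coprime to p. In any finitely ramified henselian valued field (K,v) of mixed characteristic (0,p) with initial ramification e, the valuation ring O_v is exactly the set {x ∈ K : ∃y, y^n = 1 + p x^n}, and the maximal ideal m_v is exactly the set {x ∈ K : ∃y, y^n = 1 + p^{-1} x^n}. -/
open Polynomial

section aux
variable {K Γ₀ : Type*} [Field K] [LinearOrderedCommGroupWithZero Γ₀]

/-- Counting lemma: if `[π,1)` has `e < n` elements, then any `γ < 1` has `γ^n < π`. -/
private lemma rob_count {π : Γ₀} (hπ0 : π ≠ 0) {e n : ℕ}
    (hfin : {γ : Γ₀ | π ≤ γ ∧ γ < 1}.Finite)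
    (hcard : {γ : Γ₀ | π ≤ γ ∧ γ < 1}.ncard = e) (hne : e < n)
    {γ : Γ₀} (hγ1 : γ < 1) : γ ^ n < π := by
  by_contra h
  push_neg at h
  have hγ0 : γ ≠ 0 := by
    rintro rfl
    rw [zero_pow (by omega)] at h
    exact hπ0 (le_antisymm h zero_le')
  have hmono : ∀ k m : ℕ, k ≤ m → γ ^ m ≤ γ ^ k := fun k m hkm =>
    pow_le_pow_right_of_le_one' hγ1.le hkm
  have hinj : Set.InjOn (γ ^ ·) ↑(Finset.Icc 1 n) := by
    intro a ha b hb hab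
    by_contra hne'
    wlog hab' : a < b generalizing a b
    · exact this hb ha hab.symm (Ne.symm hne') (by omega)
    have h1 : (1 : Γ₀) = γ ^ (b - a) := by
      have hab2 : γ ^ a * 1 = γ ^ a * γ ^ (b - a) := by
        rw [mul_one, ← pow_add]
        simpa [show a + (b - a) = b by omega] using hab
      exact mul_left_cancel₀ (pow_ne_zero _ hγ0) hab2
    have h2 : γ ^ (b - a) < 1 :=
      lt_of_le_of_lt (by simpa using hmono 1 (b - a) (by omega)) hγ1
    exact absurd h1.symm (ne_of_lt h2)
  have hsub : (γ ^ ·) '' ↑(Finset.Icc 1 n) ⊆ {γ' : Γ₀ | π ≤ γ' ∧ γ' < 1} := by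
    rintro _ ⟨k, hk, rfl⟩
    simp only [Finset.coe_Icc, Set.mem_Icc] at hk
    refine ⟨le_trans h (hmono k n hk.2), ?_⟩
    exact lt_of_le_of_lt (by simpa using hmono 1 k hk.1) hγ1
  have hle := Set.ncard_le_ncard hsub hfin
  rw [Set.ncard_image_of_injOn hinj, Set.ncard_coe_finset, Nat.card_Icc, hcard] at hle
  omega

end aux

/-- **Robinson's formula for finitely ramified henselian valued fields**
(Remark `Robdef`).  Let `n > e` be coprime to `p`.  In any finitely ramified henselian
valued field `(K,v)` of mixed characteristic `(0,p)` with initial ramification `e`,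
the valuation ring is `{x : ∃ y, yⁿ = 1 + p xⁿ}` and the maximal ideal is
`{x : ∃ y, yⁿ = 1 + p⁻¹ xⁿ}`. -/
theorem robinson_formula_finitely_ramified
    {K Γ₀ : Type*} [Field K] [LinearOrderedCommGroupWithZero Γ₀] [CharZero K]
    (v : Valuation K Γ₀) [HenselianLocalRing ↥(v.valuationSubring)]
    (p e n : ℕ) (hp : p.Prime) (hvp : v (p : K) < 1)
    (hfin : {γ : Γ₀ | v (p : K) ≤ γ ∧ γ < 1}.Finite)
    (hcard : {γ : Γ₀ | v (p : K) ≤ γ ∧ γ < 1}.ncard = e)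
    (hne : e < n) (hnp : Nat.Coprime n p) :
    {x : K | ∃ y : K, y ^ n = 1 + (p : K) * x ^ n} = {x : K | v x ≤ 1} ∧
    {x : K | ∃ y : K, y ^ n = 1 + (p : K)⁻¹ * x ^ n} = {x : K | v x < 1} := by
  have hn0 : n ≠ 0 := by omega
  have hπ0 : v (p : K) ≠ 0 := by
    rw [Valuation.ne_zero_iff]
    exact_mod_cast hp.ne_zero
  -- valuations of integers are ≤ 1
  have hnat : ∀ m : ℕ, v (m : K) ≤ 1 := by
    intro m
    induction m with
    | zero => simp
    | succ k ih =>
      push_cast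
      exact le_trans (v.map_add _ _) (max_le ih (le_of_eq v.map_one))
  have hint : ∀ m : ℤ, v (m : K) ≤ 1 := by
    intro m
    rcases le_or_gt 0 m with hm | hm
    · lift m to ℕ using hm; exact_mod_cast hnat m
    · have h0 : (0 : ℤ) ≤ -m := by omega
      have h1 := hnat (-m).toNat
      rw [show (((-m).toNat : ℕ) : K) = ((-m : ℤ) : K) by
        exact_mod_cast congrArg (fun z : ℤ => (z : K)) (Int.toNat_of_nonneg h0)] at h1
      rwa [Int.cast_neg, v.map_neg] at h1
  -- `v n = 1` since `n` is coprime to `p`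
  have hvn : v (n : K) = 1 := by
    rcases lt_or_eq_of_le (hnat n) with hlt | heq
    · exfalso
      have hbez := Nat.gcd_eq_gcd_ab n p
      rw [hnp] at hbez
      have hK : (1 : K) = (n : K) * (Nat.gcdA n p : K) + (p : K) * (Nat.gcdB n p : K) := by
        exact_mod_cast congrArg (fun z : ℤ => (z : K)) hbez
      have : v (1 : K) < 1 := by
        rw [hK]
        refine lt_of_le_of_lt (v.map_add _ _) (max_lt ?_ ?_)
        · rw [v.map_mul]
          calc v (n : K) * v ((Nat.gcdA n p : ℤ) : K) ≤ v (n : K) * 1 :=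
                mul_le_mul_right (hint _) _
            _ = v (n : K) := mul_one _
            _ < 1 := hlt
        · rw [v.map_mul]
          calc v (p : K) * v ((Nat.gcdB n p : ℤ) : K) ≤ v (p : K) * 1 :=
                mul_le_mul_right (hint _) _
            _ = v (p : K) := mul_one _
            _ < 1 := hvp
      simp at this
    · exact heq
  -- Hensel's lemma: an `n`-th root of `1 + c` exists whenever `v c < 1`
  have hensel : ∀ c : K, v c < 1 → ∃ y : K, y ^ n = 1 + c := by
    intro c hc
    set O := v.valuationSubring with hO
    have hmem : ∀ z : O, v (z : K) < 1 → z ∈ IsLocalRing.maximalIdeal O := by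
      intro z hz
      rw [ValuationSubring.valuation_lt_one_iff]
      exact (Valuation.isEquiv_valuation_valuationSubring v).lt_one_iff_lt_one.mp hz
    have hc1 : (1 + c) ∈ O := by
      rw [Valuation.mem_valuationSubring_iff]
      exact le_trans (v.map_add _ _) (max_le (le_of_eq v.map_one) hc.le)
    set b : O := ⟨1 + c, hc1⟩ with hb
    have hmonic : (X ^ n - C b).Monic := monic_X_pow_sub_C b hn0
    have heval : (X ^ n - C b).eval 1 ∈ IsLocalRing.maximalIdeal O := by
      apply hmem
      have : ((X ^ n - C b).eval 1 : O) = 1 - b := by simp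
      rw [this]
      have : ((1 - b : O) : K) = -c := by simp [hb]
      rw [this, v.map_neg]
      exact hc
    have hderiv : IsUnit ((X ^ n - C b).derivative.eval 1) := by
      have hd : (X ^ n - C b).derivative.eval 1 = (n : O) := by
        simp [derivative_X_pow]
      rw [hd]
      by_contra hu
      have hm1 : (n : O) ∈ IsLocalRing.maximalIdeal O := (IsLocalRing.mem_maximalIdeal _).mpr hu
      rw [ValuationSubring.valuation_lt_one_iff] at hm1
      have hm2 : v (((n : O) : K)) < 1 :=
        (Valuation.isEquiv_valuation_valuationSubring v).lt_one_iff_lt_one.mpr hm1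
      rw [show (((n : O) : K)) = (n : K) by push_cast; rfl, hvn] at hm2
      exact lt_irrefl _ hm2
    obtain ⟨a, ha, -⟩ := HenselianLocalRing.is_henselian (X ^ n - C b) hmonic 1 heval hderiv
    refine ⟨(a : K), ?_⟩
    have : a ^ n = b := by
      have := ha
      simpa [Polynomial.IsRoot, sub_eq_zero] using this
    calc (a : K) ^ n = ((a ^ n : O) : K) := by push_cast; ring
      _ = ((b : O) : K) := by rw [this]
      _ = 1 + c := rfl
  set π := v (p : K) with hπ
  have key : ∀ γ : Γ₀, γ < 1 → γ ^ n < π := fun γ hγ => rob_count hπ0 hfin hcard hne hγ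
  constructor
  · ext x
    simp only [Set.mem_setOf_eq]
    constructor
    · rintro ⟨y, hy⟩
      by_contra hx
      push_neg at hx
      have hx0 : v x ≠ 0 := ne_of_gt (lt_trans zero_lt_one hx)
      have hinv1 : (v x)⁻¹ < 1 := by
        by_contra hge
        push_neg at hge
        have h2 := mul_le_mul_right hge (v x)
        rw [mul_inv_cancel₀ hx0, mul_one] at h2
        exact absurd hx (not_lt.mpr h2)
      have h1 : (1 : Γ₀) < π * v x ^ n := by
        have hk := key (v x)⁻¹ hinv1
        calc (1 : Γ₀) = (v x)⁻¹ ^ n * v x ^ n := by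
              rw [← mul_pow, inv_mul_cancel₀ hx0, one_pow]
          _ < π * v x ^ n :=
              mul_lt_mul_of_pos_right hk (zero_lt_iff.2 (pow_ne_zero n hx0))
      have hπx : v ((p : K) * x ^ n) = π * v x ^ n := by rw [v.map_mul, v.map_pow]
      have hvy : v y ^ n = π * v x ^ n := by
        rw [← v.map_pow, hy,
          v.map_add_eq_of_lt_right (by rw [v.map_one, hπx]; exact h1), hπx]
      set γ := v y * (v x)⁻¹ with hγdef
      have hγn : γ ^ n = π := by
        rw [hγdef, mul_pow, inv_pow, hvy, mul_assoc,
          mul_inv_cancel₀ (pow_ne_zero n hx0), mul_one]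
      have hγ1 : γ < 1 := by
        by_contra hge
        push_neg at hge
        have h2 : (1 : Γ₀) ≤ γ ^ n := one_le_pow_of_one_le' hge n
        rw [hγn] at h2
        exact absurd hvp (not_lt.mpr h2)
      exact lt_irrefl _ (hγn ▸ key γ hγ1)
    · intro hx
      refine hensel ((p : K) * x ^ n) ?_
      rw [v.map_mul, v.map_pow]
      calc π * v x ^ n ≤ π * 1 :=
            mul_le_mul_right (by simpa using pow_le_pow_right_of_le_one' hx (Nat.zero_le n)) π
        _ < 1 := by rwa [mul_one]
  · ext x
    simp only [Set.mem_setOf_eq]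
    constructor
    · rintro ⟨y, hy⟩
      by_contra hx
      push_neg at hx
      have hx0 : v x ≠ 0 := ne_of_gt (lt_of_lt_of_le zero_lt_one hx)
      have hπinv : (1 : Γ₀) < π⁻¹ := by
        by_contra hle
        push_neg at hle
        have h2 := mul_le_mul_right hle π
        rw [mul_inv_cancel₀ hπ0, mul_one] at h2
        exact absurd hvp (not_lt.mpr h2)
      have h1 : (1 : Γ₀) < π⁻¹ * v x ^ n := by
        have hxn : (1 : Γ₀) ≤ v x ^ n := one_le_pow_of_one_le' hx n
        calc (1 : Γ₀) < π⁻¹ := hπinv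
          _ = π⁻¹ * 1 := (mul_one _).symm
          _ ≤ π⁻¹ * v x ^ n := mul_le_mul_right hxn _
      have hπx : v ((p : K)⁻¹ * x ^ n) = π⁻¹ * v x ^ n := by
        rw [v.map_mul, v.map_inv, v.map_pow]
      have hvy : v y ^ n = π⁻¹ * v x ^ n := by
        rw [← v.map_pow, hy,
          v.map_add_eq_of_lt_right (by rw [v.map_one, hπx]; exact h1), hπx]
      have hy0 : v y ≠ 0 := by
        intro h0
        rw [h0, zero_pow hn0] at hvy
        exact mul_ne_zero (inv_ne_zero hπ0) (pow_ne_zero n hx0) hvy.symm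
      set γ := v x * (v y)⁻¹ with hγdef
      have hγn : γ ^ n = π := by
        rw [hγdef, mul_pow, inv_pow, hvy, mul_inv, inv_inv, ← mul_assoc,
          mul_comm (v x ^ n) π, mul_assoc,
          mul_inv_cancel₀ (pow_ne_zero n hx0), mul_one]
      have hγ1 : γ < 1 := by
        by_contra hge
        push_neg at hge
        have h2 : (1 : Γ₀) ≤ γ ^ n := one_le_pow_of_one_le' hge n
        rw [hγn] at h2
        exact absurd hvp (not_lt.mpr h2)
      exact lt_irrefl _ (hγn ▸ key γ hγ1)
    · intro hx
      refine hensel ((p : K)⁻¹ * x ^ n) ?_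
      rw [v.map_mul, v.map_inv, v.map_pow]
      calc π⁻¹ * v x ^ n < π⁻¹ * π :=
            mul_lt_mul_of_pos_left (key (v x) hx) (zero_lt_iff.2 (inv_ne_zero hπ0))
        _ = 1 := inv_mul_cancel₀ hπ0
end
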